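/- arXiv:2604.20111 — 6 statements merged into one kernel-verified Lean document; each statement's English description precedes it below -/
import Mathlib

section
/- (Variable selection consistency of MAM with squared loss, Theorem 3.) Suppose |y_i| ≤ S for all i ∈ {1,…,n}, and let β̂ be a local minimizer of the MAM lower-level objective β ↦ (1/n) Σ_{i=1}^n v_i (y_i − f_β(i))² + λ Σ_{j=1}^p τ_j ‖β_j‖₂ such that the fitted values satisfy |f_β̂(i)| ≤ F for all i. If λ τ_j > 2 √d (F + S) M_j for every j with p* < j ≤ p, then β̂_j = 0 for every j > p*; i.e., the estimated informative set Ĵ = {j : β̂_j ≠ 0} satisfies Ĵ ⊆ {1,…,p*}. -/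
open scoped RealInnerProductSpace

set_option maxHeartbeats 1000000 in
/-- Theorem 3 (variable selection consistency of MAM with the squared loss):
at a local minimizer `β̂` of the weighted empirical squared loss plus the group-lasso
penalty, every block `j` outside the truly informative set `{1,…,p*}` (i.e. with
`p* ≤ j` in 0-based indexing) vanishes whenever `λ τ_j > 2 √d (F + S) M_j`;
hence `Ĵ = {j : β̂_j ≠ 0} ⊆ {1,…,p*}`. -/
theorem variable_selection_consistency_squared_loss
    (n p d pStar : ℕ) (hn : 0 < n) (hpStar : pStar ≤ p)
    (ψ : Fin n → Fin p → EuclideanSpace ℝ (Fin d))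
    (M : Fin p → ℝ) (hM : ∀ j, 0 < M j)
    (hψ : ∀ i j k, |ψ i j k| ≤ M j)
    (v : Fin n → ℝ) (hv : ∀ i, v i ∈ Set.Icc (0 : ℝ) 1)
    (y : Fin n → ℝ) (S : ℝ) (hy : ∀ i, |y i| ≤ S)
    (lam : ℝ) (hlam : 0 < lam)
    (τ : Fin p → ℝ) (hτ : ∀ j, 0 < τ j)
    (βhat : PiLp 2 (fun _ : Fin p => EuclideanSpace ℝ (Fin d)))
    (hmin : IsLocalMin
      (fun β : PiLp 2 (fun _ : Fin p => EuclideanSpace ℝ (Fin d)) =>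
        (1 / (n : ℝ)) * ∑ i, v i * (y i - ∑ j, ⟪ψ i j, β j⟫) ^ 2
          + lam * ∑ j, τ j * ‖β j‖) βhat)
    (Fbd : ℝ)
    (hfit : ∀ i, |∑ j, ⟪ψ i j, βhat j⟫| ≤ Fbd)
    (hthresh : ∀ j : Fin p, pStar ≤ (j : ℕ) →
      2 * Real.sqrt d * (Fbd + S) * M j < lam * τ j) :
    ∀ j : Fin p, pStar ≤ (j : ℕ) → βhat j = 0 := by
  classical
  intro j hj
  by_contra hne
  have hBpos : 0 < ‖βhat j‖ := norm_pos_iff.mpr hne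
  set B : ℝ := ‖βhat j‖ with hB
  -- basic nonnegativity
  have hS : 0 ≤ S := le_trans (abs_nonneg _) (hy ⟨0, hn⟩)
  have hF : 0 ≤ Fbd := le_trans (abs_nonneg _) (hfit ⟨0, hn⟩)
  -- norm bound on ψ i j
  have hψnorm : ∀ i, ‖ψ i j‖ ≤ Real.sqrt d * M j := by
    intro i
    rw [EuclideanSpace.norm_eq]
    have h1 : ∑ k, ‖ψ i j k‖ ^ 2 ≤ (d : ℝ) * (M j) ^ 2 := by
      calc ∑ k, ‖ψ i j k‖ ^ 2 ≤ ∑ _k : Fin d, (M j) ^ 2 := by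
            apply Finset.sum_le_sum
            intro k _
            have := hψ i j k
            have h0 : |ψ i j k| = ‖ψ i j k‖ := rfl
            nlinarith [abs_nonneg (ψ i j k)]
        _ = (d : ℝ) * (M j) ^ 2 := by simp [mul_comm]
    calc Real.sqrt (∑ k, ‖ψ i j k‖ ^ 2) ≤ Real.sqrt ((d : ℝ) * (M j) ^ 2) :=
          Real.sqrt_le_sqrt h1
      _ = Real.sqrt d * M j := by
          rw [Real.sqrt_mul (Nat.cast_nonneg d), Real.sqrt_sq (le_of_lt (hM j))]
  -- key quantities
  set a : Fin n → ℝ := fun i => ⟪ψ i j, βhat j⟫ with ha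
  set f : Fin n → ℝ := fun i => ∑ k, ⟪ψ i k, βhat k⟫ with hf
  set r : Fin n → ℝ := fun i => y i - f i with hr
  have habd : ∀ i, |a i| ≤ Real.sqrt d * M j * B := by
    intro i
    calc |a i| ≤ ‖ψ i j‖ * ‖βhat j‖ := abs_real_inner_le_norm _ _
      _ ≤ Real.sqrt d * M j * B := by
          apply mul_le_mul_of_nonneg_right (hψnorm i) (norm_nonneg _)
  have hrbd : ∀ i, |r i| ≤ Fbd + S := by
    intro i
    calc |r i| = |y i - f i| := rfl
      _ ≤ |y i| + |f i| := abs_sub _ _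
      _ ≤ Fbd + S := by have := hy i; have := hfit i; linarith
  set C : ℝ := (1 / (n : ℝ)) * ∑ i, v i * (2 * a i * r i) with hC
  set D : ℝ := (1 / (n : ℝ)) * ∑ i, v i * (a i) ^ 2 with hD
  have hnpos : (0 : ℝ) < n := by exact_mod_cast hn
  have hDnn : 0 ≤ D := by
    apply mul_nonneg (by positivity)
    apply Finset.sum_nonneg
    intro i _
    exact mul_nonneg (hv i).1 (sq_nonneg _)
  have hCbd : C ≤ 2 * Real.sqrt d * (Fbd + S) * M j * B := by
    have hterm : ∀ i, v i * (2 * a i * r i) ≤ 2 * Real.sqrt d * (Fbd + S) * M j * B := by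
      intro i
      have h1 : v i * (2 * a i * r i) ≤ |v i * (2 * a i * r i)| := le_abs_self _
      have h2 : |v i * (2 * a i * r i)| = |v i| * (2 * |a i| * |r i|) := by
        rw [abs_mul, abs_mul, abs_mul]; simp [abs_of_nonneg, mul_assoc]
      have h3 : |v i| ≤ 1 := by
        rw [abs_of_nonneg (hv i).1]; exact (hv i).2
      have h4 := habd i
      have h5 := hrbd i
      have hsd : (0:ℝ) ≤ Real.sqrt d * M j * B :=
        mul_nonneg (mul_nonneg (Real.sqrt_nonneg _) (hM j).le) hBpos.le
      have hprod : |a i| * |r i| ≤ (Real.sqrt d * M j * B) * (Fbd + S) :=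
        mul_le_mul h4 h5 (abs_nonneg _) hsd
      have h6 : |v i| * (2 * |a i| * |r i|) ≤ 1 * (2 * ((Real.sqrt d * M j * B) * (Fbd + S))) := by
        apply mul_le_mul h3 (by nlinarith) ?_ zero_le_one
        have := abs_nonneg (a i); have := abs_nonneg (r i); nlinarith
      calc v i * (2 * a i * r i) ≤ |v i * (2 * a i * r i)| := h1
        _ = |v i| * (2 * |a i| * |r i|) := h2
        _ ≤ 1 * (2 * ((Real.sqrt d * M j * B) * (Fbd + S))) := h6
        _ = 2 * Real.sqrt d * (Fbd + S) * M j * B := by ring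
    have hinv : (0:ℝ) ≤ 1 / (n : ℝ) := by positivity
    calc C ≤ (1 / (n : ℝ)) * ∑ _i : Fin n, (2 * Real.sqrt d * (Fbd + S) * M j * B) :=
          mul_le_mul_of_nonneg_left (Finset.sum_le_sum (fun i _ => hterm i)) hinv
      _ = 2 * Real.sqrt d * (Fbd + S) * M j * B := by
          rw [Finset.sum_const, Finset.card_univ, Fintype.card_fin, nsmul_eq_mul]
          field_simp
  have hKpos : 0 < lam * τ j * B - C := by
    have := hthresh j hj
    nlinarith [hBpos]
  set K : ℝ := lam * τ j * B - C with hKdef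
  -- the perturbation direction
  set e : PiLp 2 (fun _ : Fin p => EuclideanSpace ℝ (Fin d)) :=
    WithLp.toLp 2 (fun k => if k = j then βhat j else 0) with he
  set γ : ℝ → PiLp 2 (fun _ : Fin p => EuclideanSpace ℝ (Fin d)) :=
    fun t => βhat - t • e with hγ
  set Φ : PiLp 2 (fun _ : Fin p => EuclideanSpace ℝ (Fin d)) → ℝ :=
    fun β => (1 / (n : ℝ)) * ∑ i, v i * (y i - ∑ k, ⟪ψ i k, β k⟫) ^ 2
      + lam * ∑ k, τ k * ‖β k‖ with hΦ
  -- inner sums along the curve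
  have hsum : ∀ (t : ℝ) (i : Fin n), ∑ k, ⟪ψ i k, (γ t) k⟫ = f i - t * a i := by
    intro t i
    have h1 : ∀ k, ⟪ψ i k, (γ t) k⟫
        = ⟪ψ i k, βhat k⟫ - t * (if k = j then a i else 0) := by
      intro k
      have : (γ t) k = βhat k - t • e k := rfl
      rw [this, inner_sub_right, real_inner_smul_right]
      congr 1
      simp only [he]
      split
      · next h => subst h; rfl
      · simp
    rw [Finset.sum_congr rfl (fun k _ => h1 k), Finset.sum_sub_distrib,
      ← Finset.mul_sum, Finset.sum_ite_eq' Finset.univ j (fun _ => a i)]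
    simp [hf]
  -- penalty along the curve
  have hpen : ∀ t : ℝ, 0 ≤ t → t ≤ 1 →
      ∑ k, τ k * ‖(γ t) k‖ = (∑ k, τ k * ‖βhat k‖) - t * (τ j * B) := by
    intro t ht0 ht1
    have h1 : ∀ k, τ k * ‖(γ t) k‖
        = τ k * ‖βhat k‖ - (if k = j then t * (τ j * B) else 0) := by
      intro k
      have hk : (γ t) k = βhat k - t • e k := rfl
      by_cases hkj : k = j
      · subst hkj
        rw [hk]
        simp only [he, if_pos rfl]
        rw [if_pos trivial]
        have h2 : βhat k - t • βhat k = (1 - t) • βhat k := by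
          rw [sub_smul, one_smul]
        rw [h2, norm_smul, Real.norm_eq_abs,
          abs_of_nonneg (by linarith : (0:ℝ) ≤ 1 - t)]
        simp only [if_true]
        rw [hB]
        ring
      · rw [hk]
        simp [he, hkj]
    rw [Finset.sum_congr rfl (fun k _ => h1 k), Finset.sum_sub_distrib,
      Finset.sum_ite_eq' Finset.univ j (fun _ => t * (τ j * B))]
    simp
  -- objective along the curve
  have hΦγ : ∀ t : ℝ, 0 ≤ t → t ≤ 1 →
      Φ (γ t) = Φ βhat + t * (C + t * D - lam * (τ j * B)) := by
    intro t ht0 ht1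
    have hloss : ∑ i, v i * (y i - ∑ k, ⟪ψ i k, (γ t) k⟫) ^ 2
        = ∑ i, (v i * (r i) ^ 2 + t * (v i * (2 * a i * r i)) + t ^ 2 * (v i * (a i) ^ 2)) := by
      apply Finset.sum_congr rfl
      intro i _
      rw [hsum t i]
      have : y i - (f i - t * a i) = r i + t * a i := by simp [hr]; ring
      rw [this]; ring
    have hlossb : ∑ i, v i * (y i - ∑ k, ⟪ψ i k, βhat k⟫) ^ 2
        = ∑ i, v i * (r i) ^ 2 := by
      apply Finset.sum_congr rfl
      intro i _
      simp [hr, hf]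
    simp only [hΦ]
    rw [hloss, hlossb, hpen t ht0 ht1]
    rw [Finset.sum_add_distrib, Finset.sum_add_distrib, ← Finset.mul_sum, ← Finset.mul_sum]
    simp only [hC, hD]
    ring
  -- choose the window
  set t0 : ℝ := min 1 (K / (D + 1)) with ht0def
  have ht0pos : 0 < t0 := lt_min one_pos (div_pos hKpos (by linarith))
  have hdec : ∀ t ∈ Set.Ioo (0:ℝ) t0, Φ (γ t) < Φ βhat := by
    intro t ht
    obtain ⟨htpos, htlt⟩ := ht
    have ht1 : t ≤ 1 := le_trans (le_of_lt htlt) (min_le_left _ _)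
    have htK : t < K / (D + 1) := lt_of_lt_of_le htlt (min_le_right _ _)
    rw [hΦγ t (le_of_lt htpos) ht1]
    have hbr : C + t * D - lam * (τ j * B) < 0 := by
      have h1 : t * D ≤ t * (D + 1) := by nlinarith
      have h2 : t * (D + 1) < K := by
        rw [lt_div_iff₀ (by linarith : (0:ℝ) < D + 1)] at htK
        linarith
      simp only [hKdef] at h2
      nlinarith
    nlinarith
  -- local min gives the opposite inequality near 0
  have hcont : Continuous γ := by
    simp only [hγ]
    exact continuous_const.sub (continuous_id.smul continuous_const)
  have hγ0 : γ 0 = βhat := by simp [hγ]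
  have htend : Filter.Tendsto γ (nhds 0) (nhds βhat) := by
    rw [← hγ0]; exact hcont.tendsto 0
  have hev1 : ∀ᶠ t in nhds (0:ℝ), Φ βhat ≤ Φ (γ t) := htend.eventually hmin
  have hev1' : ∀ᶠ t in nhdsWithin (0:ℝ) (Set.Ioi 0), Φ βhat ≤ Φ (γ t) :=
    nhdsWithin_le_nhds hev1
  have hev2 : ∀ᶠ t in nhdsWithin (0:ℝ) (Set.Ioi 0), Φ (γ t) < Φ βhat := by
    filter_upwards [Ioo_mem_nhdsGT_of_mem (Set.left_mem_Ico.mpr ht0pos)] with t ht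
    exact hdec t ht
  obtain ⟨t, h1, h2⟩ := (hev1'.and hev2).exists
  linarith
end

section
/- (Variable selection consistency of MAM with logistic loss, Theorem 4.) Suppose y_i ∈ {−1, 1} for all i ∈ {1,…,n}, and let β̂ be a local minimizer of the MAM lower-level objective β ↦ (1/n) Σ_{i=1}^n v_i ( log(1 + exp(f_β(i))) − y_i f_β(i) ) + λ Σ_{j=1}^p τ_j ‖β_j‖₂. If λ τ_j > 2 √d M_j for every j with p* < j ≤ p, then β̂_j = 0 for every j > p*; i.e., the estimated informative set Ĵ = {j : β̂_j ≠ 0} satisfies Ĵ ⊆ {1,…,p*}. -/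
open scoped RealInnerProductSpace

lemma softplus_lipschitz : LipschitzWith 1 (fun x : ℝ => Real.log (1 + Real.exp x)) := by
  have hdiff : Differentiable ℝ (fun x : ℝ => Real.log (1 + Real.exp x)) := by
    intro x
    exact ((Real.differentiable_exp.const_add 1) x).log (by positivity)
  apply lipschitzWith_of_nnnorm_deriv_le hdiff
  intro x
  have h1 : HasDerivAt (fun x : ℝ => 1 + Real.exp x) (Real.exp x) x :=
    (Real.hasDerivAt_exp x).const_add 1
  have hd : HasDerivAt (fun x : ℝ => Real.log (1 + Real.exp x))
      (Real.exp x / (1 + Real.exp x)) x := h1.log (by positivity)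
  rw [hd.deriv, ← NNReal.coe_le_coe, coe_nnnorm, Real.norm_eq_abs, NNReal.coe_one,
    abs_of_nonneg (by positivity), div_le_one (by positivity)]
  linarith [Real.exp_pos x]


set_option maxHeartbeats 1000000 in
/-- Theorem 4 (variable selection consistency of MAM with the logistic loss):
at a local minimizer `β̂` of the weighted empirical logistic loss plus the group-lasso
penalty, every block `j` outside the truly informative set `{1,…,p*}` (i.e. with
`p* ≤ j` in 0-based indexing) vanishes whenever `λ τ_j > 2 √d M_j`;
hence `Ĵ = {j : β̂_j ≠ 0} ⊆ {1,…,p*}`. -/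
theorem variable_selection_consistency_logistic_loss
    (n p d pStar : ℕ) (hn : 0 < n) (hpStar : pStar ≤ p)
    (ψ : Fin n → Fin p → EuclideanSpace ℝ (Fin d))
    (M : Fin p → ℝ) (hM : ∀ j, 0 < M j)
    (hψ : ∀ i j k, |ψ i j k| ≤ M j)
    (v : Fin n → ℝ) (hv : ∀ i, v i ∈ Set.Icc (0 : ℝ) 1)
    (y : Fin n → ℝ) (hy : ∀ i, y i = -1 ∨ y i = 1)
    (lam : ℝ) (hlam : 0 < lam)
    (τ : Fin p → ℝ) (hτ : ∀ j, 0 < τ j)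
    (βhat : PiLp 2 (fun _ : Fin p => EuclideanSpace ℝ (Fin d)))
    (hmin : IsLocalMin
      (fun β : PiLp 2 (fun _ : Fin p => EuclideanSpace ℝ (Fin d)) =>
        (1 / (n : ℝ)) * ∑ i, v i *
          (Real.log (1 + Real.exp (∑ j, ⟪ψ i j, β j⟫)) - y i * ∑ j, ⟪ψ i j, β j⟫)
          + lam * ∑ j, τ j * ‖β j‖) βhat)
    (hthresh : ∀ j : Fin p, pStar ≤ (j : ℕ) →
      2 * Real.sqrt d * M j < lam * τ j) :
    ∀ j : Fin p, pStar ≤ (j : ℕ) → βhat j = 0 := by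
  intro j hj
  by_contra hb
  have hbpos : 0 < ‖βhat j‖ := norm_pos_iff.mpr hb
  obtain ⟨ε, hε, hball⟩ := Metric.eventually_nhds_iff.mp hmin
  set B : ℝ := ‖βhat j‖ with hB
  set t : ℝ := min (1/2) (ε / (2 * B)) with ht
  have ht0 : 0 < t := lt_min (by norm_num) (by positivity)
  have ht1 : t ≤ 1/2 := min_le_left _ _
  have htB : t * B < ε := by
    have h2 : t ≤ ε / (2 * B) := min_le_right _ _
    have : t * B ≤ (ε / (2 * B)) * B := by nlinarith
    have heq : (ε / (2 * B)) * B = ε / 2 := by field_simp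
    linarith
  set β' : PiLp 2 (fun _ : Fin p => EuclideanSpace ℝ (Fin d)) :=
    WithLp.toLp 2 (Function.update βhat j ((1 - t) • βhat j)) with hβ'def
  have hβ'j : β' j = (1 - t) • βhat j := Function.update_self _ _ _
  have hβ'ne : ∀ j', j' ≠ j → β' j' = βhat j' := fun j' h => Function.update_of_ne h _ _
  -- distance
  have hdist : dist β' βhat = t * B := by
    rw [PiLp.dist_eq_of_L2]
    have hterm : ∀ j' : Fin p, dist (β' j') (βhat j') ^ 2
        = if j' = j then (t * B) ^ 2 else 0 := by
      intro j'
      by_cases h : j' = j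
      · subst h
        rw [hβ'j, if_pos rfl, dist_eq_norm]
        have hsub : (1 - t) • βhat j' - βhat j' = (-t) • βhat j' := by
          rw [sub_smul, one_smul, neg_smul]; abel
        rw [hsub, norm_smul, Real.norm_eq_abs, abs_neg, abs_of_nonneg ht0.le]
      · rw [hβ'ne j' h, if_neg h, dist_self]
        norm_num
    rw [Finset.sum_congr rfl fun j' _ => hterm j', Finset.sum_ite_eq' Finset.univ j,
      if_pos (Finset.mem_univ j)]
    exact Real.sqrt_sq (by positivity)
  have hFle := hball (show dist β' βhat < ε from by rw [hdist]; exact htB)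
  simp only at hFle
  -- inner product sums
  have hsum : ∀ i, (∑ j', ⟪ψ i j', β' j'⟫)
      = (∑ j', ⟪ψ i j', βhat j'⟫) - t * ⟪ψ i j, βhat j⟫ := by
    intro i
    have key : ∀ j' : Fin p, ⟪ψ i j', β' j'⟫
        = ⟪ψ i j', βhat j'⟫ - (if j' = j then t * ⟪ψ i j, βhat j⟫ else 0) := by
      intro j'
      by_cases h : j' = j
      · subst h
        rw [hβ'j, if_pos rfl, real_inner_smul_right]
        ring
      · rw [hβ'ne j' h, if_neg h, sub_zero]
    rw [Finset.sum_congr rfl fun j' _ => key j', Finset.sum_sub_distrib,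
      Finset.sum_ite_eq' Finset.univ j, if_pos (Finset.mem_univ j)]
  -- penalty
  have hpen : (∑ j', τ j' * ‖β' j'‖) = (∑ j', τ j' * ‖βhat j'‖) - t * (τ j * B) := by
    have key : ∀ j' : Fin p, τ j' * ‖β' j'‖
        = τ j' * ‖βhat j'‖ - (if j' = j then t * (τ j * B) else 0) := by
      intro j'
      by_cases h : j' = j
      · subst h
        rw [hβ'j, if_pos rfl, norm_smul, Real.norm_eq_abs,
          abs_of_nonneg (by linarith : (0:ℝ) ≤ 1 - t)]
        ring
      · rw [hβ'ne j' h, if_neg h, sub_zero]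
    rw [Finset.sum_congr rfl fun j' _ => key j', Finset.sum_sub_distrib,
      Finset.sum_ite_eq' Finset.univ j, if_pos (Finset.mem_univ j)]
  -- norm of ψ i j
  have hψnorm : ∀ i, ‖ψ i j‖ ≤ Real.sqrt d * M j := by
    intro i
    rw [EuclideanSpace.norm_eq]
    have h1 : (∑ k, ‖ψ i j k‖ ^ 2) ≤ (∑ _k : Fin d, (M j) ^ 2) := by
      apply Finset.sum_le_sum
      intro k _
      have := hψ i j k
      rw [Real.norm_eq_abs]
      nlinarith [abs_nonneg (ψ i j k)]
    calc Real.sqrt (∑ k, ‖ψ i j k‖ ^ 2) ≤ Real.sqrt (∑ _k : Fin d, (M j) ^ 2) :=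
          Real.sqrt_le_sqrt h1
      _ = Real.sqrt d * M j := by
          rw [Finset.sum_const, Finset.card_univ, Fintype.card_fin, nsmul_eq_mul,
            Real.sqrt_mul (by positivity), Real.sqrt_sq (hM j).le]
  have hinner : ∀ i, |⟪ψ i j, βhat j⟫| ≤ Real.sqrt d * M j * B := by
    intro i
    calc |⟪ψ i j, βhat j⟫| ≤ ‖ψ i j‖ * ‖βhat j‖ := abs_real_inner_le_norm _ _
      _ ≤ Real.sqrt d * M j * B :=
        mul_le_mul_of_nonneg_right (hψnorm i) (norm_nonneg _)
  -- per-sample loss bound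
  have hloss : ∀ i, v i * (Real.log (1 + Real.exp (∑ j', ⟪ψ i j', β' j'⟫))
        - y i * ∑ j', ⟪ψ i j', β' j'⟫)
      ≤ v i * (Real.log (1 + Real.exp (∑ j', ⟪ψ i j', βhat j'⟫))
        - y i * ∑ j', ⟪ψ i j', βhat j'⟫)
        + 2 * (t * (Real.sqrt d * M j * B)) := by
    intro i
    set a : ℝ := ∑ j', ⟪ψ i j', βhat j'⟫ with ha
    set c : ℝ := t * ⟪ψ i j, βhat j⟫ with hc'
    have hc : |c| ≤ t * (Real.sqrt d * M j * B) := by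
      rw [hc', abs_mul, abs_of_nonneg ht0.le]
      exact mul_le_mul_of_nonneg_left (hinner i) ht0.le
    rw [hsum i, ← ha]
    have hsp : |Real.log (1 + Real.exp (a - c)) - Real.log (1 + Real.exp a)| ≤ |c| := by
      have := softplus_lipschitz.dist_le_mul (a - c) a
      simp only [Real.dist_eq, NNReal.coe_one, one_mul] at this
      calc |Real.log (1 + Real.exp (a - c)) - Real.log (1 + Real.exp a)| ≤ |a - c - a| := this
        _ = |c| := by rw [show a - c - a = -c by ring, abs_neg]
    have habs := abs_le.mp hsp
    have hv0 := (hv i).1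
    have hv1 := (hv i).2
    have key : Real.log (1 + Real.exp (a - c)) - y i * (a - c)
        ≤ (Real.log (1 + Real.exp a) - y i * a) + 2 * |c| := by
      rcases hy i with h | h <;> rw [h] <;>
        linarith [habs.1, habs.2, le_abs_self c, neg_abs_le c]
    calc v i * (Real.log (1 + Real.exp (a - c)) - y i * (a - c))
        ≤ v i * ((Real.log (1 + Real.exp a) - y i * a) + 2 * |c|) :=
          mul_le_mul_of_nonneg_left key hv0
      _ = v i * (Real.log (1 + Real.exp a) - y i * a) + v i * (2 * |c|) := by ring
      _ ≤ v i * (Real.log (1 + Real.exp a) - y i * a) + 2 * (t * (Real.sqrt d * M j * B)) := by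
          have h1 : v i * (2 * |c|) ≤ 2 * |c| :=
            mul_le_of_le_one_left (by positivity) hv1
          linarith
  -- sum the per-sample bounds
  set S : ℝ := ∑ i, v i * (Real.log (1 + Real.exp (∑ j', ⟪ψ i j', βhat j'⟫))
      - y i * ∑ j', ⟪ψ i j', βhat j'⟫) with hS
  set S' : ℝ := ∑ i, v i * (Real.log (1 + Real.exp (∑ j', ⟪ψ i j', β' j'⟫))
      - y i * ∑ j', ⟪ψ i j', β' j'⟫) with hS'
  have hsumloss : S' ≤ S + n * (2 * (t * (Real.sqrt d * M j * B))) := by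
    rw [hS', hS]
    calc (∑ i, v i * (Real.log (1 + Real.exp (∑ j', ⟪ψ i j', β' j'⟫))
          - y i * ∑ j', ⟪ψ i j', β' j'⟫))
        ≤ ∑ i, (v i * (Real.log (1 + Real.exp (∑ j', ⟪ψ i j', βhat j'⟫))
          - y i * ∑ j', ⟪ψ i j', βhat j'⟫) + 2 * (t * (Real.sqrt d * M j * B))) :=
          Finset.sum_le_sum fun i _ => hloss i
      _ = _ := by
          rw [Finset.sum_add_distrib, Finset.sum_const, Finset.card_univ, Fintype.card_fin,
            nsmul_eq_mul]
  -- combine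
  have hn' : (0:ℝ) < n := Nat.cast_pos.mpr hn
  rw [hpen] at hFle
  -- hFle : (1/n)*S + lam*P ≤ (1/n)*S' + lam*(P - t*(τ j * B))
  have hkey : lam * (t * (τ j * B)) ≤ (1 / (n:ℝ)) * (S' - S) := by nlinarith
  have hfin : (1 / (n:ℝ)) * (S' - S) ≤ 2 * (t * (Real.sqrt d * M j * B)) := by
    have h1 : S' - S ≤ n * (2 * (t * (Real.sqrt d * M j * B))) := by linarith
    have h2 : (1 / (n:ℝ)) * (S' - S) ≤ (1 / (n:ℝ)) * (n * (2 * (t * (Real.sqrt d * M j * B)))) :=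
      mul_le_mul_of_nonneg_left h1 (by positivity)
    have h3 : (1 / (n:ℝ)) * (n * (2 * (t * (Real.sqrt d * M j * B))))
        = 2 * (t * (Real.sqrt d * M j * B)) := by
      field_simp
    linarith
  have hcontra := hthresh j hj
  have htBpos : 0 < t * B := mul_pos ht0 hbpos
  nlinarith [mul_pos ht0 hbpos]
end

section
/- (Smoothness of the weighted loss, Eq. (still_smooth).) Let V : ℝ → ℝ be twice differentiable with |V(u)| ≤ 1, |V′(u)| ≤ δ and |V″(u)| ≤ B for all u, and let ℓ : ℝ^q → ℝ be differentiable with |ℓ(β)| ≤ M for all β, ‖∇ℓ(β)‖ ≤ ρ for all β, and ∇ℓ L-Lipschitz. Then the weighted loss h(β) = V(ℓ(β)) · ℓ(β) is differentiable and its gradient ∇h is Lipschitz continuous with Lipschitz constant ρ²(B·M + 2δ) + L(1 + δ·M); in particular h is Lipschitz-smooth. -/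
open InnerProductSpace

/-- Gradient of the composition of a real function with a scalar-valued map. -/
lemma hasGradientAt_comp' {q : ℕ} (ℓ : EuclideanSpace ℝ (Fin q) → ℝ)
    (v : EuclideanSpace ℝ (Fin q)) (β : EuclideanSpace ℝ (Fin q))
    (g : ℝ → ℝ) (g' : ℝ)
    (hg : HasDerivAt g g' (ℓ β)) (hℓ : HasGradientAt ℓ v β) :
    HasGradientAt (fun x => g (ℓ x)) (g' • v) β := by
  rw [hasGradientAt_iff_hasFDerivAt] at hℓ ⊢
  have := hg.comp_hasFDerivAt β hℓ
  simpa [map_smul, Function.comp_def] using this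

/-- Smoothness of the weighted loss (Eq. `still_smooth`): if the weighting function
`V : ℝ → ℝ` is twice differentiable with `|V| ≤ 1`, `|V′| ≤ δ`, `|V″| ≤ B`, and the loss
`ℓ` is differentiable with `|ℓ| ≤ M`, `‖∇ℓ‖ ≤ ρ`, and `∇ℓ` `L`-Lipschitz, then the
weighted loss `h(β) = V(ℓ(β))·ℓ(β)` is differentiable and `∇h` is Lipschitz with
constant `ρ²(B M + 2δ) + L(1 + δ M)`. -/
theorem weighted_loss_lipschitz_smooth
    (q : ℕ)
    (V : ℝ → ℝ) (δ B : ℝ)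
    (hV_diff : Differentiable ℝ V)
    (hV'_diff : Differentiable ℝ (deriv V))
    (hV_bdd : ∀ u, |V u| ≤ 1)
    (hV'_bdd : ∀ u, |deriv V u| ≤ δ)
    (hV''_bdd : ∀ u, |deriv (deriv V) u| ≤ B)
    (ℓ : EuclideanSpace ℝ (Fin q) → ℝ) (M ρ L : ℝ)
    (hℓ_diff : Differentiable ℝ ℓ)
    (hℓ_bdd : ∀ β, |ℓ β| ≤ M)
    (hℓ_grad_bdd : ∀ β, ‖gradient ℓ β‖ ≤ ρ)
    (hℓ_grad_lip : ∀ β β', ‖gradient ℓ β - gradient ℓ β'‖ ≤ L * ‖β - β'‖) :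
    Differentiable ℝ (fun β => V (ℓ β) * ℓ β) ∧
    ∀ β β', ‖gradient (fun β => V (ℓ β) * ℓ β) β
        - gradient (fun β => V (ℓ β) * ℓ β) β'‖
      ≤ (ρ ^ 2 * (B * M + 2 * δ) + L * (1 + δ * M)) * ‖β - β'‖ := by
  -- the derivative of g(u) = V(u) * u
  set gp : ℝ → ℝ := fun u => deriv V u * u + V u with hgp_def
  have hg : ∀ u, HasDerivAt (fun u => V u * u) (gp u) u := by
    intro u
    have := ((hV_diff u).hasDerivAt.mul (hasDerivAt_id u))
    exact this.congr_deriv (by simp [hgp_def])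
  -- the second derivative of g
  have hgp : ∀ u, HasDerivAt gp (deriv (deriv V) u * u + deriv V u + deriv V u) u := by
    intro u
    have h1 := ((hV'_diff u).hasDerivAt.mul (hasDerivAt_id u))
    have := h1.add (hV_diff u).hasDerivAt
    exact this.congr_deriv (by simp [hgp_def])
  -- gradient formula for h
  have hgrad : ∀ β, HasGradientAt (fun β => V (ℓ β) * ℓ β) (gp (ℓ β) • gradient ℓ β) β := by
    intro β
    exact hasGradientAt_comp' ℓ _ β (fun u => V u * u) (gp (ℓ β)) (hg (ℓ β))
      ((hℓ_diff β).hasGradientAt)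
  have hdiff : Differentiable ℝ (fun β => V (ℓ β) * ℓ β) := fun β =>
    ((hgrad β).hasFDerivAt).differentiableAt
  refine ⟨hdiff, fun β β' => ?_⟩
  rw [(hgrad β).gradient, (hgrad β').gradient]
  -- basic nonnegativity facts
  have hM : 0 ≤ M := le_trans (abs_nonneg _) (hℓ_bdd β)
  have hδ : 0 ≤ δ := le_trans (abs_nonneg _) (hV'_bdd 0)
  have hB : 0 ≤ B := le_trans (abs_nonneg _) (hV''_bdd 0)
  have hρ : 0 ≤ ρ := le_trans (norm_nonneg _) (hℓ_grad_bdd β)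
  -- ℓ is ρ-Lipschitz
  have hfd : ∀ x, fderiv ℝ ℓ x = toDual ℝ (EuclideanSpace ℝ (Fin q)) (gradient ℓ x) := by
    intro x
    rw [gradient, LinearIsometryEquiv.apply_symm_apply]
  have hℓ_lip : |ℓ β - ℓ β'| ≤ ρ * ‖β - β'‖ := by
    have := (convex_univ : Convex ℝ (Set.univ : Set (EuclideanSpace ℝ (Fin q)))).norm_image_sub_le_of_norm_fderiv_le
      (fun x _ => hℓ_diff x) (fun x _ => by
        rw [hfd x, LinearIsometryEquiv.norm_map]; exact hℓ_grad_bdd x)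
      (Set.mem_univ β') (Set.mem_univ β)
    simpa [Real.norm_eq_abs] using this
  -- gp is (B*M + 2δ)-Lipschitz on the ball of radius M
  have hgp_lip : |gp (ℓ β) - gp (ℓ β')| ≤ (B * M + 2 * δ) * |ℓ β - ℓ β'| := by
    have hs : Convex ℝ (Metric.closedBall (0 : ℝ) M) := convex_closedBall 0 M
    have := hs.norm_image_sub_le_of_norm_hasDerivWithin_le
      (f := gp) (f' := fun u => deriv (deriv V) u * u + deriv V u + deriv V u)
      (fun x _ => (hgp x).hasDerivWithinAt)
      (fun x hx => by
        have hx' : |x| ≤ M := by simpa [Real.norm_eq_abs] using mem_closedBall_zero_iff.mp hx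
        have h1 : |deriv (deriv V) x * x| ≤ B * M := by
          rw [abs_mul]
          exact mul_le_mul (hV''_bdd x) hx' (abs_nonneg _)
            (le_trans (abs_nonneg _) (hV''_bdd x))
        calc ‖deriv (deriv V) x * x + deriv V x + deriv V x‖
            ≤ |deriv (deriv V) x * x| + |deriv V x| + |deriv V x| := by
              simp only [Real.norm_eq_abs]
              exact le_trans (abs_add_le _ _) (add_le_add_left (abs_add_le _ _) _)
          _ ≤ B * M + δ + δ := by
              exact add_le_add (add_le_add h1 (hV'_bdd x)) (hV'_bdd x)
          _ = B * M + 2 * δ := by ring)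
      (x := ℓ β') (y := ℓ β)
      (mem_closedBall_zero_iff.mpr (by simpa [Real.norm_eq_abs] using hℓ_bdd β'))
      (mem_closedBall_zero_iff.mpr (by simpa [Real.norm_eq_abs] using hℓ_bdd β))
    simpa [Real.norm_eq_abs] using this
  -- gp is bounded by 1 + δM
  have hgp_bdd : ∀ u, |u| ≤ M → |gp u| ≤ 1 + δ * M := by
    intro u hu
    calc |gp u| ≤ |deriv V u * u| + |V u| := abs_add_le _ _
      _ ≤ δ * M + 1 := by
          refine add_le_add ?_ (hV_bdd u)
          rw [abs_mul]
          exact mul_le_mul (hV'_bdd u) hu (abs_nonneg _) hδ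
      _ = 1 + δ * M := by ring
  -- main estimate
  have key : gp (ℓ β) • gradient ℓ β - gp (ℓ β') • gradient ℓ β'
      = (gp (ℓ β) - gp (ℓ β')) • gradient ℓ β + gp (ℓ β') • (gradient ℓ β - gradient ℓ β') := by
    module
  rw [key]
  calc ‖(gp (ℓ β) - gp (ℓ β')) • gradient ℓ β + gp (ℓ β') • (gradient ℓ β - gradient ℓ β')‖
      ≤ |gp (ℓ β) - gp (ℓ β')| * ‖gradient ℓ β‖
        + |gp (ℓ β')| * ‖gradient ℓ β - gradient ℓ β'‖ := by
        refine le_trans (norm_add_le _ _) (add_le_add ?_ ?_) <;>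
          rw [norm_smul, Real.norm_eq_abs]
    _ ≤ ((B * M + 2 * δ) * (ρ * ‖β - β'‖)) * ρ + (1 + δ * M) * (L * ‖β - β'‖) := by
        refine add_le_add ?_ ?_
        · refine mul_le_mul (le_trans hgp_lip ?_) (hℓ_grad_bdd β) (norm_nonneg _) ?_
          · refine mul_le_mul_of_nonneg_left hℓ_lip ?_
            nlinarith [le_trans (abs_nonneg _) (hV''_bdd 0)]
          · exact mul_nonneg (by nlinarith) (by positivity)
        · refine mul_le_mul (hgp_bdd _ (hℓ_bdd β')) (hℓ_grad_lip β β') (norm_nonneg _) ?_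
          nlinarith
    _ = ρ ^ 2 * (B * M + 2 * δ) * ‖β - β'‖ + L * (1 + δ * M) * ‖β - β'‖ := by ring
    _ = (ρ ^ 2 * (B * M + 2 * δ) + L * (1 + δ * M)) * ‖β - β'‖ := by ring
end

section
/- (Stability recursion bound.) Let c, γ, L, m > 0 and let (a_t)_{t≥1} be a sequence of nonnegative reals with a_1 = 0 and a_{t+1} ≤ (1 + cγ/t) a_t + 2cL/(t·m) for every t ≥ 1. Then for every T ≥ 1, a_{T+1} ≤ (2L/m) (c + 1/γ) T^{cγ}. -/
open Finset Real

lemma key_log (x : ℝ) (hx : 0 < x) : 1/(x+1) ≤ Real.log (x+1) - Real.log x := by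
  have h1 : (0:ℝ) < x + 1 := by linarith
  have h := Real.log_le_sub_one_of_pos (show (0:ℝ) < x/(x+1) by positivity)
  rw [Real.log_div hx.ne' h1.ne'] at h
  have h2 : x/(x+1) - 1 = -(1/(x+1)) := by field_simp; ring
  linarith [h, h2.le]

noncomputable def Hsum (n : ℕ) : ℝ := ∑ k ∈ Finset.Icc 1 n, (1:ℝ)/k

lemma Hsum_succ (n : ℕ) : Hsum (n+1) = Hsum n + 1/((n:ℝ)+1) := by
  unfold Hsum
  rw [Finset.sum_Icc_succ_top (by omega : 1 ≤ n + 1)]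
  push_cast
  ring

lemma Hsum_le_log (t : ℕ) (ht : 1 ≤ t) : ∀ T, t ≤ T →
    Hsum T - Hsum t ≤ Real.log T - Real.log t := by
  intro T hT
  induction T, hT using Nat.le_induction with
  | base => simp
  | succ n hn ih =>
    have hn0 : (0:ℝ) < n := by exact_mod_cast Nat.lt_of_lt_of_le Nat.zero_lt_one (le_trans ht hn)
    have := key_log n hn0
    rw [Hsum_succ]
    push_cast
    linarith

lemma sum_pow_bound (s : ℝ) (hs : 0 < s) : ∀ T : ℕ, 1 ≤ T →
    ∑ t ∈ Finset.Icc 1 T, 1/((t:ℝ) * (t:ℝ)^s) ≤ 1 + (1 - (T:ℝ)^(-s))/s := by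
  intro T hT
  induction T, hT using Nat.le_induction with
  | base => norm_num
  | succ n hn ih =>
    rw [Finset.sum_Icc_succ_top (by omega : 1 ≤ n + 1)]
    have hA : (0:ℝ) < n := by exact_mod_cast Nat.lt_of_lt_of_le Nat.zero_lt_one hn
    have hB : (0:ℝ) < (n:ℝ) + 1 := by linarith
    have hAs : (0:ℝ) < (n:ℝ)^s := Real.rpow_pos_of_pos hA s
    have hBs : (0:ℝ) < ((n:ℝ)+1)^s := Real.rpow_pos_of_pos hB s
    have hlog : 1/((n:ℝ)+1) ≤ Real.log ((n:ℝ)+1) - Real.log n := key_log n hA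
    have h1 : (((n:ℝ)+1) + s)/((n:ℝ)+1) ≤ ((n:ℝ)+1)^s / (n:ℝ)^s := by
      rw [← Real.div_rpow hB.le hA.le]
      have e1 : (((n:ℝ)+1)/(n:ℝ))^s = Real.exp (s * Real.log (((n:ℝ)+1)/n)) := by
        rw [Real.rpow_def_of_pos (by positivity)]; ring_nf
      rw [e1, Real.log_div hB.ne' hA.ne']
      have h2 : s * (1/((n:ℝ)+1)) ≤ s * (Real.log ((n:ℝ)+1) - Real.log n) :=
        mul_le_mul_of_nonneg_left hlog hs.le
      have h3 := Real.add_one_le_exp (s * (Real.log ((n:ℝ)+1) - Real.log n))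
      have e2 : (((n:ℝ)+1) + s)/((n:ℝ)+1) = 1 + s * (1/((n:ℝ)+1)) := by field_simp
      rw [e2]; linarith
    rw [div_le_div_iff₀ hB hAs] at h1
    have hstep : 1/(((n:ℝ)+1) * ((n:ℝ)+1)^s) ≤ ((n:ℝ)^(-s) - ((n:ℝ)+1)^(-s))/s := by
      rw [Real.rpow_neg hA.le, Real.rpow_neg hB.le]
      rw [div_le_div_iff₀ (by positivity) hs]
      nlinarith [h1, mul_inv_cancel₀ hAs.ne', mul_inv_cancel₀ hBs.ne',
        inv_pos.mpr hAs, inv_pos.mpr hBs, mul_pos hB hBs,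
        mul_le_mul_of_nonneg_right h1 (inv_pos.mpr hAs).le]
    push_cast
    have : 1 + (1 - ((n:ℝ))^(-s))/s + ((n:ℝ)^(-s) - ((n:ℝ)+1)^(-s))/s
         = 1 + (1 - ((n:ℝ)+1)^(-s))/s := by ring
    linarith [ih, hstep]


/-- Stability recursion bound: if `a₁ = 0`, `a_t ≥ 0` and
`a_{t+1} ≤ (1 + cγ/t) a_t + 2cL/(t m)` for all `t ≥ 1`, then
`a_{T+1} ≤ (2L/m)(c + 1/γ) T^{cγ}` for every `T ≥ 1`. -/
theorem stability_recursion_bound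
    (c γ L m : ℝ) (hc : 0 < c) (hγ : 0 < γ) (hL : 0 < L) (hm : 0 < m)
    (a : ℕ → ℝ) (ha_nonneg : ∀ t, 0 ≤ a t) (ha1 : a 1 = 0)
    (hrec : ∀ t : ℕ, 1 ≤ t →
      a (t + 1) ≤ (1 + c * γ / t) * a t + 2 * c * L / (t * m)) :
    ∀ T : ℕ, 1 ≤ T →
      a (T + 1) ≤ (2 * L / m) * (c + 1 / γ) * (T : ℝ) ^ (c * γ) := by
  set s : ℝ := c * γ with hsdef
  have hs : 0 < s := mul_pos hc hγ
  have hK : (0:ℝ) < 2 * c * L / m := by positivity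
  -- main induction claim
  have main : ∀ T : ℕ, 1 ≤ T → a (T+1) ≤ (2*c*L/m) *
      ∑ t ∈ Finset.Icc 1 T, (1/(t:ℝ)) * Real.exp (s * (Hsum T - Hsum t)) := by
    intro T hT
    induction T, hT using Nat.le_induction with
    | base =>
      have h := hrec 1 le_rfl
      simp only [ha1] at h
      norm_num at h ⊢
      simpa using h
    | succ n hn ih =>
      have hn0 : (0:ℝ) < n := by exact_mod_cast Nat.lt_of_lt_of_le Nat.zero_lt_one hn
      have hB : (0:ℝ) < (n:ℝ) + 1 := by linarith
      have h := hrec (n+1) (by omega)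
      push_cast at h
      have hcoef : (0:ℝ) ≤ 1 + s / ((n:ℝ)+1) := by positivity
      have hih := mul_le_mul_of_nonneg_left ih hcoef
      have h2 : a (n+1+1) ≤ (2*c*L/m) * ((1 + s/((n:ℝ)+1)) *
          ∑ t ∈ Finset.Icc 1 n, (1/(t:ℝ)) * Real.exp (s * (Hsum n - Hsum t)))
          + 2*c*L/(((n:ℝ)+1)*m) := by
        calc a (n+1+1) ≤ (1 + s/((n:ℝ)+1)) * a (n+1) + 2*c*L/(((n:ℝ)+1)*m) := h
          _ ≤ (1 + s/((n:ℝ)+1)) * ((2*c*L/m) *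
              ∑ t ∈ Finset.Icc 1 n, (1/(t:ℝ)) * Real.exp (s * (Hsum n - Hsum t)))
              + 2*c*L/(((n:ℝ)+1)*m) := by linarith [hih]
          _ = _ := by ring
      -- termwise bound
      have hterm : ∀ t ∈ Finset.Icc 1 n,
          (1 + s/((n:ℝ)+1)) * ((1/(t:ℝ)) * Real.exp (s * (Hsum n - Hsum t)))
          ≤ (1/(t:ℝ)) * Real.exp (s * (Hsum (n+1) - Hsum t)) := by
        intro t ht
        simp only [Finset.mem_Icc] at ht
        have ht0 : (0:ℝ) < t := by exact_mod_cast Nat.lt_of_lt_of_le Nat.zero_lt_one ht.1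
        have hE : Real.exp (s * (Hsum (n+1) - Hsum t))
            = Real.exp (s/((n:ℝ)+1)) * Real.exp (s * (Hsum n - Hsum t)) := by
          rw [← Real.exp_add, Hsum_succ n]
          ring_nf
        have h5 : (1 + s/((n:ℝ)+1)) ≤ Real.exp (s/((n:ℝ)+1)) := by
          have := Real.add_one_le_exp (s/((n:ℝ)+1)); linarith
        rw [hE]
        calc (1 + s/((n:ℝ)+1)) * ((1/(t:ℝ)) * Real.exp (s * (Hsum n - Hsum t)))
            = (1/(t:ℝ)) * ((1 + s/((n:ℝ)+1)) * Real.exp (s * (Hsum n - Hsum t))) := by ring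
          _ ≤ (1/(t:ℝ)) * (Real.exp (s/((n:ℝ)+1)) * Real.exp (s * (Hsum n - Hsum t))) := by
              apply mul_le_mul_of_nonneg_left _ (by positivity)
              exact mul_le_mul_of_nonneg_right h5 (Real.exp_pos _).le
      have hsum := Finset.sum_le_sum hterm
      rw [← Finset.mul_sum] at hsum
      have hnew : (2*c*L/m) * ∑ t ∈ Finset.Icc 1 (n+1), (1/(t:ℝ)) * Real.exp (s * (Hsum (n+1) - Hsum t))
          = (2*c*L/m) * (∑ t ∈ Finset.Icc 1 n, (1/(t:ℝ)) * Real.exp (s * (Hsum (n+1) - Hsum t)))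
            + (2*c*L/m) * ((1/((n:ℝ)+1)) * 1) := by
        rw [Finset.sum_Icc_succ_top (by omega : 1 ≤ n + 1)]
        push_cast
        rw [sub_self, mul_zero, Real.exp_zero]
        ring
      calc a (n+1+1) ≤ (2*c*L/m) * ((1 + s/((n:ℝ)+1)) *
              ∑ t ∈ Finset.Icc 1 n, (1/(t:ℝ)) * Real.exp (s * (Hsum n - Hsum t)))
              + 2*c*L/(((n:ℝ)+1)*m) := h2
        _ ≤ (2*c*L/m) * (∑ t ∈ Finset.Icc 1 n, (1/(t:ℝ)) * Real.exp (s * (Hsum (n+1) - Hsum t)))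
              + 2*c*L/(((n:ℝ)+1)*m) := by gcongr
        _ = _ := by rw [hnew]; field_simp
  -- final assembly
  intro T hT
  have hT0 : (0:ℝ) < T := by exact_mod_cast Nat.lt_of_lt_of_le Nat.zero_lt_one hT
  have hTs : (0:ℝ) < (T:ℝ)^s := Real.rpow_pos_of_pos hT0 s
  have hterm2 : ∀ t ∈ Finset.Icc 1 T,
      (1/(t:ℝ)) * Real.exp (s * (Hsum T - Hsum t))
      ≤ (T:ℝ)^s * (1/((t:ℝ) * (t:ℝ)^s)) := by
    intro t ht
    simp only [Finset.mem_Icc] at ht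
    have ht0 : (0:ℝ) < t := by exact_mod_cast Nat.lt_of_lt_of_le Nat.zero_lt_one ht.1
    have hts : (0:ℝ) < (t:ℝ)^s := Real.rpow_pos_of_pos ht0 s
    have hH := Hsum_le_log t ht.1 T ht.2
    have hexp : Real.exp (s * (Hsum T - Hsum t)) ≤ Real.exp (s * (Real.log T - Real.log t)) := by
      apply Real.exp_le_exp.mpr
      exact mul_le_mul_of_nonneg_left hH hs.le
    have hval : Real.exp (s * (Real.log T - Real.log t)) = (T:ℝ)^s / (t:ℝ)^s := by
      rw [mul_sub, Real.exp_sub, Real.rpow_def_of_pos hT0, Real.rpow_def_of_pos ht0]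
      ring_nf
    rw [hval] at hexp
    calc (1/(t:ℝ)) * Real.exp (s * (Hsum T - Hsum t))
        ≤ (1/(t:ℝ)) * ((T:ℝ)^s / (t:ℝ)^s) := by
          exact mul_le_mul_of_nonneg_left hexp (by positivity)
      _ = (T:ℝ)^s * (1/((t:ℝ) * (t:ℝ)^s)) := by field_simp
  have hsum2 : ∑ t ∈ Finset.Icc 1 T, (1/(t:ℝ)) * Real.exp (s * (Hsum T - Hsum t))
      ≤ (T:ℝ)^s * ∑ t ∈ Finset.Icc 1 T, 1/((t:ℝ) * (t:ℝ)^s) := by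
    rw [Finset.mul_sum]
    exact Finset.sum_le_sum hterm2
  have hsb := sum_pow_bound s hs T hT
  have hsb2 : ∑ t ∈ Finset.Icc 1 T, 1/((t:ℝ) * (t:ℝ)^s) ≤ 1 + 1/s := by
    have : (0:ℝ) < (T:ℝ)^(-s) := Real.rpow_pos_of_pos hT0 _
    have h2 : (1 - (T:ℝ)^(-s))/s ≤ 1/s := by
      gcongr
      linarith
    linarith [hsb, h2]
  calc a (T+1) ≤ (2*c*L/m) * ∑ t ∈ Finset.Icc 1 T, (1/(t:ℝ)) * Real.exp (s * (Hsum T - Hsum t)) :=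
        main T hT
    _ ≤ (2*c*L/m) * ((T:ℝ)^s * (1 + 1/s)) := by
        gcongr
        calc ∑ t ∈ Finset.Icc 1 T, (1/(t:ℝ)) * Real.exp (s * (Hsum T - Hsum t))
            ≤ (T:ℝ)^s * ∑ t ∈ Finset.Icc 1 T, 1/((t:ℝ) * (t:ℝ)^s) := hsum2
          _ ≤ (T:ℝ)^s * (1 + 1/s) := by gcongr
    _ = (2 * L / m) * (c + 1 / γ) * (T:ℝ)^s := by
        rw [hsdef]
        field_simp
end

section
/- (Uniform stability of SGD on nonconvex smooth losses.) Let P = ℝ^k and let ℓ : P × Z → [0, 1] be a loss such that for every z ∈ Z the map p ↦ ℓ(p, z) is L̄-Lipschitz and differentiable with γ̄-Lipschitz gradient. Let A be the randomized algorithm that, given a dataset D = (z_1,…,z_m) ∈ Z^m, runs T steps of stochastic gradient descent p^{t+1} = p^t − η_t ∇_p ℓ(p^t, z_{I_t}), starting from a fixed p¹, where the indices I_t are independent and uniform on {1,…,m} and the step sizes satisfy η_t ≤ c/t for some c > 0. Then A is ε-uniformly stable in expectation with ε ≤ (1 + 1/(γ̄ c)) (2 c L̄²)^{1/(γ̄ c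 + 1)} T^{γ̄ c/(γ̄ c + 1)} / (m − 1): for all datasets D, D' ∈ Z^m differing in at most one coordinate and every z ∈ Z, E_A[ ℓ(A(D), z) − ℓ(A(D'), z) ] ≤ ε. -/
open MeasureTheory

/-- AM-GM consequence: `1 + q(1-r) ≤ r^(-q)` for `0 < r ≤ 1`, `q > 0`. -/
lemma amgm_rpow {q r : ℝ} (hq : 0 < q) (hr0 : 0 < r) (hr1 : r ≤ 1) :
    1 + q * (1 - r) ≤ r ^ (-q) := by
  have hq1 : (0:ℝ) < 1 + q := by linarith
  have hs0 : (0:ℝ) ≤ 1 + q * (1 - r) := by nlinarith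
  have h := Real.geom_mean_le_arith_mean2_weighted
    (w₁ := q / (1 + q)) (w₂ := 1 / (1 + q)) (p₁ := r) (p₂ := 1 + q * (1 - r))
    (by positivity) (by positivity) hr0.le hs0 (by field_simp; ring)
  have hsum : q / (1 + q) * r + 1 / (1 + q) * (1 + q * (1 - r)) = 1 := by
    field_simp; ring
  rw [hsum] at h
  -- raise both sides to power (1+q)
  have h2 : (r ^ (q / (1 + q)) * (1 + q * (1 - r)) ^ (1 / (1 + q))) ^ (1 + q) ≤ 1 := by
    have := Real.rpow_le_one (by positivity) h hq1.le
    simpa using this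
  rw [Real.mul_rpow (by positivity) (by positivity), ← Real.rpow_mul hr0.le,
    ← Real.rpow_mul hs0] at h2
  rw [div_mul_cancel₀ _ (ne_of_gt hq1), one_div, inv_mul_cancel₀ (ne_of_gt hq1),
    Real.rpow_one] at h2
  -- now : r^q * (1 + q(1-r)) ≤ 1
  have hrq : (0:ℝ) < r ^ q := Real.rpow_pos_of_pos hr0 _
  rw [Real.rpow_neg hr0.le]
  calc 1 + q * (1 - r) ≤ (r ^ q)⁻¹ * (r ^ q * (1 + q * (1 - r))) := by
        rw [inv_mul_cancel_left₀ (ne_of_gt hrq)]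
    _ ≤ (r ^ q)⁻¹ * 1 := by
        apply mul_le_mul_of_nonneg_left h2 (by positivity)
    _ = (r ^ q)⁻¹ := mul_one _

/-- Mean-value-type inequality for `x ↦ x^(-q)`. -/
lemma rpow_neg_sub_ge {q a b : ℝ} (hq : 0 < q) (ha : 0 < a) (hab : a ≤ b) :
    q * b ^ (-(1 + q)) * (b - a) ≤ a ^ (-q) - b ^ (-q) := by
  have hb : 0 < b := lt_of_lt_of_le ha hab
  have hr0 : 0 < a / b := by positivity
  have hr1 : a / b ≤ 1 := by rw [div_le_one hb]; exact hab
  have key := amgm_rpow hq hr0 hr1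
  have ha_eq : a ^ (-q) = b ^ (-q) * (a / b) ^ (-q) := by
    rw [Real.div_rpow ha.le hb.le, Real.rpow_neg ha.le, Real.rpow_neg hb.le]
    field_simp
  have hbq : (0:ℝ) < b ^ (-q) := Real.rpow_pos_of_pos hb _
  calc q * b ^ (-(1 + q)) * (b - a) = b ^ (-q) * (q * (1 - a / b)) := by
        rw [show -(1 + q) = -q + (-1) by ring, Real.rpow_add hb, Real.rpow_neg_one]
        field_simp
    _ ≤ b ^ (-q) * ((a / b) ^ (-q) - 1) := by
        apply mul_le_mul_of_nonneg_left _ hbq.le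
        linarith [key]
    _ = a ^ (-q) - b ^ (-q) := by rw [ha_eq]; ring

/-- Key numeric estimate: `∑_{t=1}^T min(1, X t^{-(1+q)}) ≤ (1+1/q) X^{1/(1+q)}`. -/
lemma sum_min_rpow_le {q X : ℝ} (hq : 0 < q) (hX : 0 < X) (T : ℕ) :
    ∑ t ∈ Finset.Icc 1 T, min 1 (X * (t : ℝ) ^ (-(1 + q))) ≤ (1 + 1/q) * X ^ (1/(1+q)) := by
  have hq1 : (0:ℝ) < 1 + q := by linarith
  set u : ℝ := X ^ (1/(1+q)) with hu_def
  have hu : 0 < u := Real.rpow_pos_of_pos hX _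
  have hXu : X = u ^ (1+q) := by
    rw [hu_def, ← Real.rpow_mul hX.le, one_div, inv_mul_cancel₀ (ne_of_gt hq1), Real.rpow_one]
  have hXuq : X * u ^ (-q) = u := by
    rw [hXu, ← Real.rpow_add hu, show 1 + q + -q = 1 by ring, Real.rpow_one]
  set F : ℕ → ℝ := fun n => if (n:ℝ) ≤ u then (n:ℝ) else (1 + 1/q) * u - X/q * (n:ℝ) ^ (-q)
    with hF_def
  have hstep : ∀ n : ℕ, min 1 (X * ((n:ℝ)+1) ^ (-(1 + q))) ≤ F (n+1) - F n := by
    intro n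
    have hb : (0:ℝ) < (n:ℝ) + 1 := by positivity
    have hcast : ((n+1 : ℕ):ℝ) = (n:ℝ) + 1 := by push_cast; ring
    by_cases h1 : ((n:ℝ)+1) ≤ u
    · have h2 : (n:ℝ) ≤ u := by linarith
      have : F (n+1) - F n = 1 := by
        rw [hF_def]; simp only [hcast, if_pos h1, if_pos h2]; ring
      rw [this]; exact min_le_left _ _
    · -- u < n+1
      push_neg at h1
      have hvle : X * ((n:ℝ)+1) ^ (-(1+q)) ≤ 1 := by
        have hmono : ((n:ℝ)+1) ^ (-(1+q)) ≤ u ^ (-(1+q)) := by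
          rw [Real.rpow_neg hb.le, Real.rpow_neg hu.le]
          exact inv_anti₀ (Real.rpow_pos_of_pos hu _)
            (Real.rpow_le_rpow hu.le h1.le hq1.le)
        have : X * u ^ (-(1+q)) = 1 := by
          rw [hXu, ← Real.rpow_add hu, show 1 + q + -(1+q) = 0 by ring, Real.rpow_zero]
        nlinarith [hX.le, hmono]
      have hvnn : 0 ≤ X * ((n:ℝ)+1) ^ (-(1+q)) := by positivity
      have hmin : min 1 (X * ((n:ℝ)+1) ^ (-(1+q))) = X * ((n:ℝ)+1) ^ (-(1+q)) :=
        min_eq_right hvle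
      rw [hmin]
      by_cases h2 : (n:ℝ) ≤ u
      · -- cross case
        have hkey := rpow_neg_sub_ge hq hu h1.le
        have : F (n+1) - F n = (u - (n:ℝ)) + X/q * (u ^ (-q) - ((n:ℝ)+1) ^ (-q)) := by
          rw [hF_def]; simp only [hcast, if_neg (not_le.mpr h1), if_pos h2]
          have : X/q * u ^ (-q) = u/q := by
            rw [div_mul_eq_mul_div, hXuq]
          rw [mul_sub, this]; ring
        rw [this]
        have hub1 : (n:ℝ)+1 - u ≤ 1 := by linarith
        have hub0 : 0 ≤ (n:ℝ)+1 - u := by linarith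
        have hXq : X/q * (q * ((n:ℝ)+1) ^ (-(1+q)) * (((n:ℝ)+1) - u))
            = X * ((n:ℝ)+1) ^ (-(1+q)) * (((n:ℝ)+1) - u) := by
          field_simp
        nlinarith [mul_le_mul_of_nonneg_left hkey (le_of_lt (div_pos hX hq)),
          mul_le_mul_of_nonneg_right hvle (sub_nonneg.mpr h2)]
      · push_neg at h2
        have ha : (0:ℝ) < (n:ℝ) := lt_trans hu h2
        have hkey := rpow_neg_sub_ge hq ha (by linarith : (n:ℝ) ≤ (n:ℝ)+1)
        have : F (n+1) - F n = X/q * ((n:ℝ) ^ (-q) - ((n:ℝ)+1) ^ (-q)) := by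
          rw [hF_def]; simp only [hcast, if_neg (not_le.mpr h1), if_neg (not_le.mpr h2)]
          ring
        rw [this]
        have := mul_le_mul_of_nonneg_left hkey (le_of_lt (div_pos hX hq))
        calc X * ((n:ℝ)+1) ^ (-(1+q))
            = X/q * (q * ((n:ℝ)+1) ^ (-(1+q)) * (((n:ℝ)+1) - (n:ℝ))) := by
              field_simp; ring
          _ ≤ X/q * ((n:ℝ) ^ (-q) - ((n:ℝ)+1) ^ (-q)) := this
  -- telescope
  have hsum : ∑ t ∈ Finset.Icc 1 T, min 1 (X * (t : ℝ) ^ (-(1 + q)))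
      = ∑ i ∈ Finset.range T, min 1 (X * ((i:ℝ)+1) ^ (-(1 + q))) := by
    rw [← Finset.Ico_add_one_right_eq_Icc, Finset.sum_Ico_eq_sum_range]
    simp only [Nat.succ_sub_one, Nat.add_sub_cancel]
    apply Finset.sum_congr rfl
    intro i _
    congr 2
    push_cast; ring
  rw [hsum]
  have htel : ∑ i ∈ Finset.range T, (F (i+1) - F i) = F T - F 0 := Finset.sum_range_sub F T
  have hF0 : F 0 = 0 := by rw [hF_def]; simp [hu.le]
  have hFT : F T ≤ (1 + 1/q) * u := by
    rw [hF_def]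
    by_cases h : ((T:ℕ):ℝ) ≤ u
    · simp only [if_pos h]
      have : (1:ℝ) ≤ 1 + 1/q := by
        have : 0 < 1/q := by positivity
        linarith
      nlinarith [hu.le]
    · simp only [if_neg h]
      have : 0 ≤ X/q * ((T:ℝ)) ^ (-q) := by positivity
      linarith
  calc ∑ i ∈ Finset.range T, min 1 (X * ((i:ℝ)+1) ^ (-(1 + q)))
      ≤ ∑ i ∈ Finset.range T, (F (i+1) - F i) := Finset.sum_le_sum (fun i _ => hstep i)
    _ = F T - F 0 := htel
    _ ≤ (1 + 1/q) * u := by rw [hF0]; linarith [hFT]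

section helpers

variable {k : ℕ}

/-- norm of gradient bounded by Lipschitz constant. -/
lemma norm_gradient_le_of_lip {f : EuclideanSpace ℝ (Fin k) → ℝ} {L : ℝ} (hL : 0 ≤ L)
    (hlip : ∀ p p', |f p - f p'| ≤ L * ‖p - p'‖) (p : EuclideanSpace ℝ (Fin k)) :
    ‖gradient f p‖ ≤ L := by
  have h1 : ‖fderiv ℝ f p‖ ≤ L := by
    apply norm_fderiv_le_of_lip' ℝ hL
    filter_upwards with x
    simpa [Real.norm_eq_abs] using hlip x p
  have h2 : ‖gradient f p‖ = ‖fderiv ℝ f p‖ := by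
    rw [gradient]
    exact (InnerProductSpace.toDual ℝ (EuclideanSpace ℝ (Fin k))).symm.norm_map _
  rw [h2]; exact h1

end helpers

/-- Uniform stability of SGD on nonconvex smooth losses: running `T` steps of SGD with
step sizes `η_t ≤ c/t` on a `[0,1]`-valued loss that is `L̄`-Lipschitz with `γ̄`-Lipschitz
gradient, with independent uniformly sampled indices coupled across the two runs, is
`ε`-uniformly stable in expectation with
`ε ≤ (1 + 1/(γ̄ c)) (2 c L̄²)^{1/(γ̄ c + 1)} T^{γ̄ c/(γ̄ c + 1)} / (m − 1)`. -/
theorem sgd_uniform_stability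
    (k : ℕ) (Z : Type) [MeasurableSpace Z]
    (ℓ : EuclideanSpace ℝ (Fin k) → Z → ℝ)
    (hℓ_range : ∀ p z, ℓ p z ∈ Set.Icc (0 : ℝ) 1)
    (Lbar γbar : ℝ) (hLbar : 0 < Lbar) (hγbar : 0 < γbar)
    (hℓ_diff : ∀ z, Differentiable ℝ (fun p => ℓ p z))
    (hℓ_lip : ∀ z p p', |ℓ p z - ℓ p' z| ≤ Lbar * ‖p - p'‖)
    (hℓ_grad_lip : ∀ z p p',
      ‖gradient (fun q => ℓ q z) p - gradient (fun q => ℓ q z) p'‖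
        ≤ γbar * ‖p - p'‖)
    (m : ℕ) (hm : 1 < m)
    (Ω : Type) [MeasurableSpace Ω] (π : Measure Ω) [IsProbabilityMeasure π]
    (I : ℕ → Ω → Fin m)
    (hI_meas : ∀ t, Measurable (I t))
    (hI_indep : ProbabilityTheory.iIndepFun I π)
    (hI_unif : ∀ t (i : Fin m), π (I t ⁻¹' {i}) = 1 / (m : ENNReal))
    (T : ℕ) (hT : 1 ≤ T)
    (η : ℕ → ℝ) (hη_nonneg : ∀ t, 0 ≤ η t)
    (c : ℝ) (hc : 0 < c)
    (hstep : ∀ t : ℕ, 1 ≤ t → η t ≤ c / t)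
    (P : (Fin m → Z) → ℕ → Ω → EuclideanSpace ℝ (Fin k))
    (p1 : EuclideanSpace ℝ (Fin k))
    (hinit : ∀ D ω, P D 1 ω = p1)
    (hupdate : ∀ D (t : ℕ), 1 ≤ t → t ≤ T → ∀ ω,
      P D (t + 1) ω = P D t ω
        - η t • gradient (fun p => ℓ p (D (I t ω))) (P D t ω)) :
    ∀ D D' : Fin m → Z,
      (∃ i₀ : Fin m, ∀ i : Fin m, i ≠ i₀ → D i = D' i) →
      ∀ z : Z,
        ∫ ω, (ℓ (P D (T + 1) ω) z - ℓ (P D' (T + 1) ω) z) ∂π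
          ≤ (1 + 1 / (γbar * c)) * (2 * c * Lbar ^ 2) ^ (1 / (γbar * c + 1))
              * (T : ℝ) ^ (γbar * c / (γbar * c + 1)) / ((m : ℝ) - 1) := by
  intro D D' hDD' z
  classical
  obtain ⟨i₀, hDi⟩ := hDD'
  set q : ℝ := γbar * c with hq_def
  have hq : 0 < q := mul_pos hγbar hc
  have hq1 : (0:ℝ) < 1 + q := by linarith
  have hTpos : (0:ℝ) < (T:ℝ) := by exact_mod_cast Nat.lt_of_lt_of_le Nat.zero_lt_one hT
  set X : ℝ := 2 * c * Lbar ^ 2 * (T:ℝ) ^ q with hX_def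
  have hX : 0 < X := by
    apply mul_pos (by positivity)
    exact Real.rpow_pos_of_pos hTpos _
  -- gradient norm bound
  have hgrad : ∀ (z' : Z) p, ‖gradient (fun p => ℓ p z') p‖ ≤ Lbar := fun z' p =>
    norm_gradient_le_of_lip hLbar.le (hℓ_lip z') p
  -- product bound
  have hprod : ∀ t n : ℕ, 1 ≤ t → t ≤ n →
      ∏ r ∈ Finset.Icc (t+1) n, (1 + η r * γbar) ≤ ((n:ℝ)/(t:ℝ)) ^ q := by
    intro t n h1t htn
    induction n, htn using Nat.le_induction with
    | base =>
        rw [Finset.Icc_eq_empty (by omega), Finset.prod_empty]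
        rw [div_self (by positivity : ((t:ℝ)) ≠ 0), Real.one_rpow]
    | succ n hn ih =>
        have hn0 : (0:ℝ) < (n:ℝ) := by
          have : 1 ≤ n := le_trans h1t hn
          exact_mod_cast this
        have hfac : 1 + η (n+1) * γbar ≤ (((n:ℝ)+1)/(n:ℝ)) ^ q := by
          have hη1 : η (n+1) ≤ c / ((n:ℝ)+1) := by
            have := hstep (n+1) (by omega)
            push_cast at this ⊢
            exact this
          have hr0 : (0:ℝ) < (n:ℝ)/((n:ℝ)+1) := by positivity
          have hr1 : (n:ℝ)/((n:ℝ)+1) ≤ 1 := by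
            rw [div_le_one (by positivity)]; linarith
          have hb := amgm_rpow hq hr0 hr1
          have h1r : 1 - (n:ℝ)/((n:ℝ)+1) = 1/((n:ℝ)+1) := by field_simp; ring
          have hrpow : ((n:ℝ)/((n:ℝ)+1)) ^ (-q) = (((n:ℝ)+1)/(n:ℝ)) ^ q := by
            rw [Real.rpow_neg hr0.le, ← Real.inv_rpow hr0.le, inv_div]
          rw [h1r, hrpow] at hb
          calc 1 + η (n+1) * γbar ≤ 1 + c / ((n:ℝ)+1) * γbar := by
                have := mul_le_mul_of_nonneg_right hη1 hγbar.le
                linarith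
            _ = 1 + q * (1/((n:ℝ)+1)) := by rw [hq_def]; ring
            _ ≤ (((n:ℝ)+1)/(n:ℝ)) ^ q := hb
        have hprod_nn : (0:ℝ) ≤ ∏ r ∈ Finset.Icc (t+1) n, (1 + η r * γbar) := by
          apply Finset.prod_nonneg
          intro r _
          have := mul_nonneg (hη_nonneg r) hγbar.le
          linarith
        have hfac_nn : (0:ℝ) ≤ 1 + η (n+1) * γbar := by
          have := mul_nonneg (hη_nonneg (n+1)) hγbar.le
          linarith
        rw [Finset.prod_Icc_succ_top (by omega : t + 1 ≤ n + 1)]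
        calc (∏ r ∈ Finset.Icc (t+1) n, (1 + η r * γbar)) * (1 + η (n+1) * γbar)
            ≤ ((n:ℝ)/(t:ℝ)) ^ q * ((((n:ℝ)+1))/(n:ℝ)) ^ q := by
              apply mul_le_mul ih hfac hfac_nn (by positivity)
          _ = (((n:ℝ)+1)/(t:ℝ)) ^ q := by
              rw [← Real.mul_rpow (by positivity) (by positivity)]
              congr 1
              field_simp
          _ = ((((n+1 : ℕ)):ℝ)/(t:ℝ)) ^ q := by norm_num
  -- state difference bound
  have hstate : ∀ t : ℕ, t ≤ T → ∀ ω, ‖P D (t+1) ω - P D' (t+1) ω‖ ≤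
      ∑ s ∈ Finset.Icc 1 t, (if I s ω = i₀ then 2 * η s * Lbar else 0) *
        ∏ r ∈ Finset.Icc (s+1) t, (1 + η r * γbar) := by
    intro t
    induction t with
    | zero =>
        intro _ ω
        simp [hinit D ω, hinit D' ω]
    | succ t ih =>
        intro hle ω
        have htT : t ≤ T := by omega
        have ihω := ih htT ω
        have hup := hupdate D (t+1) (by omega) hle ω
        have hup' := hupdate D' (t+1) (by omega) hle ω
        have hηnn := hη_nonneg (t+1)
        set p := P D (t+1) ω with hp
        set p' := P D' (t+1) ω with hp'
        set g1 := gradient (fun r => ℓ r (D (I (t+1) ω))) p with hg1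
        set g2 := gradient (fun r => ℓ r (D' (I (t+1) ω))) p' with hg2
        have hkey : ‖P D (t+1+1) ω - P D' (t+1+1) ω‖ ≤
            (1 + η (t+1) * γbar) * ‖p - p'‖ +
            (if I (t+1) ω = i₀ then 2 * η (t+1) * Lbar else 0) := by
          rw [hup, hup']
          have hrearr : p - η (t+1) • g1 - (p' - η (t+1) • g2)
              = (p - p') - η (t+1) • (g1 - g2) := by
            rw [smul_sub]; abel
          rw [hrearr]
          refine le_trans (norm_sub_le _ _) ?_
          rw [norm_smul, Real.norm_eq_abs, abs_of_nonneg hηnn]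
          by_cases hit : I (t+1) ω = i₀
          · rw [if_pos hit]
            have hb : ‖g1 - g2‖ ≤ 2 * Lbar := by
              refine le_trans (norm_sub_le _ _) ?_
              have := hgrad (D (I (t+1) ω)) p
              have := hgrad (D' (I (t+1) ω)) p'
              rw [hg1, hg2]; linarith
            have hA := mul_le_mul_of_nonneg_left hb hηnn
            have hB : 0 ≤ η (t+1) * (γbar * ‖p - p'‖) :=
              mul_nonneg hηnn (mul_nonneg hγbar.le (norm_nonneg _))
            have hexp : (1 + η (t+1) * γbar) * ‖p - p'‖
                = ‖p - p'‖ + η (t+1) * (γbar * ‖p - p'‖) := by ring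
            rw [hexp]
            linarith
          · rw [if_neg hit]
            have hsame : D (I (t+1) ω) = D' (I (t+1) ω) := hDi _ hit
            have hb : ‖g1 - g2‖ ≤ γbar * ‖p - p'‖ := by
              rw [hg1, hg2, hsame]
              exact hℓ_grad_lip (D' (I (t+1) ω)) p p'
            have hA := mul_le_mul_of_nonneg_left hb hηnn
            have hexp : (1 + η (t+1) * γbar) * ‖p - p'‖
                = ‖p - p'‖ + η (t+1) * (γbar * ‖p - p'‖) := by ring
            rw [hexp]
            linarith
        refine le_trans hkey ?_
        have hfac_nn : (0:ℝ) ≤ 1 + η (t+1) * γbar := by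
          have := mul_nonneg (hη_nonneg (t+1)) hγbar.le
          linarith
        have hsum : (1 + η (t+1) * γbar) * ‖p - p'‖ ≤
            (1 + η (t+1) * γbar) * ∑ s ∈ Finset.Icc 1 t,
              (if I s ω = i₀ then 2 * η s * Lbar else 0) *
                ∏ r ∈ Finset.Icc (s+1) t, (1 + η r * γbar) :=
          mul_le_mul_of_nonneg_left ihω hfac_nn
        rw [Finset.sum_Icc_succ_top (by omega : 1 ≤ t + 1)]
        rw [Finset.Icc_eq_empty (by omega : ¬ (t+1+1) ≤ t+1), Finset.prod_empty, mul_one]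
        have hshift : ∑ s ∈ Finset.Icc 1 t, (if I s ω = i₀ then 2 * η s * Lbar else 0) *
              ∏ r ∈ Finset.Icc (s+1) (t+1), (1 + η r * γbar)
            = (1 + η (t+1) * γbar) * ∑ s ∈ Finset.Icc 1 t,
              (if I s ω = i₀ then 2 * η s * Lbar else 0) *
                ∏ r ∈ Finset.Icc (s+1) t, (1 + η r * γbar) := by
          rw [Finset.mul_sum]
          apply Finset.sum_congr rfl
          intro s hs
          have hs' : s ≤ t := (Finset.mem_Icc.mp hs).2
          rw [Finset.prod_Icc_succ_top (by omega : s + 1 ≤ t + 1)]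
          ring
        rw [hshift]
        linarith
  -- per-term bound
  have habar : ∀ t ∈ Finset.Icc 1 T, Lbar * ((2 * η t * Lbar) *
      ∏ r ∈ Finset.Icc (t+1) T, (1 + η r * γbar)) ≤ X * (t:ℝ) ^ (-(1+q)) := by
    intro t ht
    obtain ⟨h1t, htT⟩ := Finset.mem_Icc.mp ht
    have ht0 : (0:ℝ) < (t:ℝ) := by exact_mod_cast h1t
    have hηt : η t ≤ c / (t:ℝ) := hstep t h1t
    have hprod_nn : (0:ℝ) ≤ ∏ r ∈ Finset.Icc (t+1) T, (1 + η r * γbar) := by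
      apply Finset.prod_nonneg
      intro r _
      have := mul_nonneg (hη_nonneg r) hγbar.le
      linarith
    have hp := hprod t T h1t htT
    have hrpow_pos : (0:ℝ) ≤ ((T:ℝ)/(t:ℝ)) ^ q := by positivity
    have step1 : Lbar * ((2 * η t * Lbar) * ∏ r ∈ Finset.Icc (t+1) T, (1 + η r * γbar))
        ≤ Lbar * ((2 * (c/(t:ℝ)) * Lbar) * ((T:ℝ)/(t:ℝ)) ^ q) := by
      have h2 : 2 * η t * Lbar ≤ 2 * (c/(t:ℝ)) * Lbar := by
        have := mul_le_mul_of_nonneg_right hηt (by linarith [hLbar.le] : (0:ℝ) ≤ 2 * Lbar)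
        nlinarith
      have h3 : (0:ℝ) ≤ 2 * η t * Lbar :=
        mul_nonneg (mul_nonneg (by norm_num) (hη_nonneg t)) hLbar.le
      apply mul_le_mul_of_nonneg_left _ hLbar.le
      apply mul_le_mul h2 hp hprod_nn
      positivity
    refine le_trans step1 (le_of_eq ?_)
    rw [hX_def, Real.div_rpow hTpos.le ht0.le,
      show -(1+q) = (-1) + (-q) by ring, Real.rpow_add ht0, Real.rpow_neg_one,
      Real.rpow_neg ht0.le]
    have htq : (0:ℝ) < (t:ℝ) ^ q := Real.rpow_pos_of_pos ht0 _
    field_simp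
  -- pathwise bound on the loss difference
  have hpath : ∀ ω, ℓ (P D (T+1) ω) z - ℓ (P D' (T+1) ω) z ≤
      ∑ t ∈ Finset.Icc 1 T,
        (if I t ω = i₀ then min 1 (X * (t:ℝ) ^ (-(1+q))) else 0) := by
    intro ω
    have hterm_nn : ∀ t ∈ Finset.Icc 1 T,
        (0:ℝ) ≤ (if I t ω = i₀ then min 1 (X * (t:ℝ) ^ (-(1+q))) else 0) := by
      intro t ht
      by_cases hit : I t ω = i₀
      · rw [if_pos hit]
        apply le_min (by norm_num)
        have ht0 : (0:ℝ) < (t:ℝ) := by exact_mod_cast (Finset.mem_Icc.mp ht).1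
        positivity
      · rw [if_neg hit]
    by_cases hbig : ∃ t ∈ Finset.Icc 1 T, I t ω = i₀ ∧ 1 ≤ X * (t:ℝ) ^ (-(1+q))
    · obtain ⟨t, ht, hit, h1⟩ := hbig
      have hd1 : ℓ (P D (T+1) ω) z - ℓ (P D' (T+1) ω) z ≤ 1 := by
        have r1 := hℓ_range (P D (T+1) ω) z
        have r2 := hℓ_range (P D' (T+1) ω) z
        rw [Set.mem_Icc] at r1 r2
        linarith [r1.2, r2.1]
      refine le_trans hd1 ?_
      have heq : (1:ℝ) = (if I t ω = i₀ then min 1 (X * (t:ℝ) ^ (-(1+q))) else 0) := by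
        rw [if_pos hit, min_eq_left h1]
      exact le_trans (le_of_eq heq) (Finset.single_le_sum hterm_nn ht)
    · push_neg at hbig
      have hd1 : ℓ (P D (T+1) ω) z - ℓ (P D' (T+1) ω) z ≤
          Lbar * ‖P D (T+1) ω - P D' (T+1) ω‖ :=
        le_trans (le_abs_self _) (hℓ_lip z _ _)
      refine le_trans hd1 ?_
      refine le_trans (mul_le_mul_of_nonneg_left (hstate T le_rfl ω) hLbar.le) ?_
      rw [Finset.mul_sum]
      apply Finset.sum_le_sum
      intro t ht
      by_cases hit : I t ω = i₀
      · rw [if_pos hit, if_pos hit, min_eq_right (hbig t ht hit).le]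
        exact habar t ht
      · rw [if_neg hit, if_neg hit, zero_mul, mul_zero]
  -- integration
  by_cases hint : Integrable (fun ω => ℓ (P D (T + 1) ω) z - ℓ (P D' (T + 1) ω) z) π
  swap
  · rw [integral_undef hint]
    apply div_nonneg _ (by push_cast; linarith [(by exact_mod_cast hm : (1:ℝ) < (m:ℝ))])
    apply mul_nonneg (mul_nonneg _ (Real.rpow_nonneg (by positivity) _))
      (Real.rpow_nonneg hTpos.le _)
    have : 0 < 1 / (γbar * c) := by positivity
    linarith
  · have hm1 : (0:ℝ) < (m:ℝ) - 1 := by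
      have : (1:ℝ) < (m:ℝ) := by exact_mod_cast hm
      linarith
    have hm0 : (0:ℝ) < (m:ℝ) := by linarith
    set g : Ω → ℝ := fun ω => ∑ t ∈ Finset.Icc 1 T,
      (I t ⁻¹' {i₀}).indicator (fun _ => min 1 (X * (t:ℝ) ^ (-(1+q)))) ω with hg_def
    have hgterm_int : ∀ t ∈ Finset.Icc 1 T,
        Integrable ((I t ⁻¹' {i₀}).indicator
          (fun _ => min 1 (X * (t:ℝ) ^ (-(1+q)))) : Ω → ℝ) π := by
      intro t _
      exact (integrable_const _).indicator ((hI_meas t) (measurableSet_singleton i₀))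
    have hgint : Integrable g π := by
      rw [hg_def]
      exact integrable_finset_sum _ hgterm_int
    have hfg : ∀ ω, ℓ (P D (T + 1) ω) z - ℓ (P D' (T + 1) ω) z ≤ g ω := by
      intro ω
      refine le_trans (hpath ω) (le_of_eq ?_)
      rw [hg_def]
      apply Finset.sum_congr rfl
      intro t _
      rw [Set.indicator_apply]
      simp only [Set.mem_preimage, Set.mem_singleton_iff]
    have hIg : ∫ ω, (ℓ (P D (T + 1) ω) z - ℓ (P D' (T + 1) ω) z) ∂π ≤ ∫ ω, g ω ∂π :=
      integral_mono hint hgint hfg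
    have hgval : ∫ ω, g ω ∂π
        = ∑ t ∈ Finset.Icc 1 T, (1/(m:ℝ)) * min 1 (X * (t:ℝ) ^ (-(1+q))) := by
      rw [hg_def, integral_finset_sum _ hgterm_int]
      apply Finset.sum_congr rfl
      intro t _
      rw [integral_indicator_const _ ((hI_meas t) (measurableSet_singleton i₀))]
      rw [measureReal_def, hI_unif t i₀]
      rw [smul_eq_mul]
      congr 1
      rw [ENNReal.toReal_div]
      simp
    refine le_trans hIg ?_
    rw [hgval, ← Finset.mul_sum]
    have hsum := sum_min_rpow_le hq hX T
    have hfinal : (1/(m:ℝ)) * ∑ t ∈ Finset.Icc 1 T, min 1 (X * (t:ℝ) ^ (-(1+q)))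
        ≤ (1/(m:ℝ)) * ((1 + 1/q) * X ^ (1/(1+q))) :=
      mul_le_mul_of_nonneg_left hsum (by positivity)
    refine le_trans hfinal ?_
    -- now pure arithmetic
    have hXrw : X ^ (1/(1+q)) = (2 * c * Lbar ^ 2) ^ (1 / (q + 1)) * (T:ℝ) ^ (q / (q + 1)) := by
      rw [hX_def, Real.mul_rpow (by positivity) (Real.rpow_nonneg hTpos.le _),
        ← Real.rpow_mul hTpos.le]
      rw [show q * (1/(1+q)) = q / (q+1) by rw [add_comm]; ring, show (1:ℝ)/(1+q) = 1/(q+1) by rw [add_comm]]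
    rw [hXrw]
    rw [div_eq_mul_one_div ((1 + 1 / (γbar * c)) * (2 * c * Lbar ^ 2) ^ (1 / (γbar * c + 1))
      * (T : ℝ) ^ (γbar * c / (γbar * c + 1))) ((m:ℝ) - 1)]
    have hAnn : (0:ℝ) ≤ (1 + 1/q) * ((2 * c * Lbar ^ 2) ^ (1 / (q + 1)) * (T:ℝ) ^ (q / (q + 1))) := by
      have h1q : (0:ℝ) < 1/q := by positivity
      apply mul_nonneg (by linarith)
      exact mul_nonneg (Real.rpow_nonneg (by positivity) _) (Real.rpow_nonneg hTpos.le _)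
    calc (1/(m:ℝ)) * ((1 + 1/q) * ((2 * c * Lbar ^ 2) ^ (1 / (q + 1)) * (T:ℝ) ^ (q / (q + 1))))
        ≤ (1/((m:ℝ)-1)) * ((1 + 1/q) * ((2 * c * Lbar ^ 2) ^ (1 / (q + 1)) * (T:ℝ) ^ (q / (q + 1)))) := by
          apply mul_le_mul_of_nonneg_right _ hAnn
          apply one_div_le_one_div_of_le hm1
          linarith
      _ = (1 + 1 / (γbar * c)) * (2 * c * Lbar ^ 2) ^ (1 / (γbar * c + 1))
          * (T : ℝ) ^ (γbar * c / (γbar * c + 1)) * (1/((m:ℝ) - 1)) := by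
          rw [hq_def]; ring
end

section
/- (Theorem 6: generalization bound for the MAM bilevel algorithm.) Let Z be a measurable space with meta distribution μ and let the upper losses satisfy: for every ξ ∈ Z, the map θ ↦ ℓ(θ, β(θ), ξ) (the meta loss of the one-step-updated lower parameter, viewed as a function of the weighting parameter θ ∈ ℝ^k) takes values in [0,1], is L̄-Lipschitz, and has γ̄-Lipschitz gradient. Let A be the algorithm that, given a meta dataset D ∈ Z^m and a training dataset W' ∈ W^n, runs T steps of stochastic gradient descent on the empirical meta risk θ ↦ (1/m) Σ_{i=1}^m ℓ(θ, β(θ), ξ_i) with uniformly sampled meta examples and step sizes η_t ≤ c/t, where c ≤ s(ℓ)/(2 L̄²) for a fixed constant s(ℓ). Then there exist constants K > 0 and C ∈ (0, 1), depending only on c, L̄ and γ̄ (and not on T or m), such that | E[ R(A(D, W')) − R̂_D(A(D, W')) ] | ≤ K · T^C / m, where R(θ) = E_{ξ∼μ}[ℓ(θ, β(θ), ξ)] is the population meta risk, R̂_D is the empirical meta risk on D, and the expectation is over the algorithm's randomness and over D ∼ μ^m, W' ∼ ν^n. -/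
set_option maxHeartbeats 2000000

open MeasureTheory

section MamAux


lemma mam_integrable_of_bound {X : Type*} [MeasurableSpace X] (μ : Measure X)
    [IsFiniteMeasure μ] {f : X → ℝ} (C : ℝ)
    (hm : AEStronglyMeasurable f μ) (hb : ∀ x, |f x| ≤ C) : Integrable f μ :=
  ⟨hm, HasFiniteIntegral.of_bounded (C := C)
    (Filter.Eventually.of_forall (by simpa [Real.norm_eq_abs] using hb))⟩

lemma mam_abs_integral_le {X : Type*} [MeasurableSpace X] (μ : Measure X)
    [IsProbabilityMeasure μ] {f : X → ℝ} {C : ℝ} (hb : ∀ x, |f x| ≤ C) :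
    |∫ x, f x ∂μ| ≤ C := by
  have := norm_integral_le_of_norm_le_const (μ := μ) (f := f) (C := C)
    (Filter.Eventually.of_forall (by simpa [Real.norm_eq_abs] using hb))
  simpa [Real.norm_eq_abs] using this

lemma mam_grad_norm_le {k : ℕ} {f : EuclideanSpace ℝ (Fin k) → ℝ} {L : ℝ} (hL : 0 ≤ L)
    (hlip : ∀ a b, |f a - f b| ≤ L * ‖a - b‖) (x : EuclideanSpace ℝ (Fin k)) :
    ‖gradient f x‖ ≤ L := by
  have hlips : LipschitzWith L.toNNReal f := by
    rw [lipschitzWith_iff_dist_le_mul]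
    intro a b
    rw [Real.dist_eq, dist_eq_norm]
    simpa [Real.coe_toNNReal _ hL] using hlip a b
  have h1 : ‖fderiv ℝ f x‖ ≤ L := by
    simpa [Real.coe_toNNReal _ hL] using norm_fderiv_le_of_lipschitz ℝ (x₀ := x) hlips
  have h2 : ‖gradient f x‖ = ‖fderiv ℝ f x‖ := by
    rw [gradient]
    exact (InnerProductSpace.toDual ℝ _).symm.norm_map _
  rw [h2]; exact h1

lemma mam_sum_inv_le_log (t : ℕ) (ht : 1 ≤ t) :
    ∀ T : ℕ, t ≤ T → (∑ s ∈ Finset.Ico (t + 1) (T + 1), (1 : ℝ) / s)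
      ≤ Real.log T - Real.log t := by
  refine Nat.le_induction ?_ ?_
  · simp
  · intro T hT ih
    rw [Finset.sum_Ico_succ_top (by omega)]
    have hT0 : (0 : ℝ) < T := by exact_mod_cast Nat.lt_of_lt_of_le ht hT
    have hT10 : (0 : ℝ) < (T : ℝ) + 1 := by positivity
    have key : Real.log T + 1 / ((T : ℝ) + 1) ≤ Real.log (T + 1) := by
      have h := Real.log_le_sub_one_of_pos (x := (T : ℝ) / ((T : ℝ) + 1)) (by positivity)
      rw [Real.log_div (by positivity) (by positivity)] at h
      have : (T : ℝ) / ((T : ℝ) + 1) - 1 = -(1 / ((T : ℝ) + 1)) := by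
        field_simp
        ring
      rw [this] at h
      linarith
    push_cast
    linarith [ih]

lemma mam_traj_bound {E : Type*} [NormedAddCommGroup E] (x y : ℕ → E) (a b : ℕ → ℝ)
    (hb : ∀ t, 1 ≤ b t) (r0 : ℕ) (h0 : x r0 = y r0) :
    ∀ R : ℕ, r0 ≤ R →
      (∀ r, r0 ≤ r → r < R → ‖x (r + 1) - y (r + 1)‖ ≤ b r * ‖x r - y r‖ + a r) →
      ‖x R - y R‖ ≤ ∑ t ∈ Finset.Ico r0 R, a t * ∏ s ∈ Finset.Ico (t + 1) R, b s := by
  refine Nat.le_induction ?_ ?_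
  · intro _; simp [h0]
  · intro R hR ih hstep
    have hihstep : ∀ r, r0 ≤ r → r < R → ‖x (r + 1) - y (r + 1)‖ ≤ b r * ‖x r - y r‖ + a r :=
      fun r h1 h2 => hstep r h1 (by omega)
    have h1 : ‖x (R + 1) - y (R + 1)‖ ≤ b R * ‖x R - y R‖ + a R := hstep R hR (by omega)
    have h2 := ih hihstep
    have hbR : (0 : ℝ) ≤ b R := le_trans zero_le_one (hb R)
    calc ‖x (R + 1) - y (R + 1)‖ ≤ b R * ‖x R - y R‖ + a R := h1
      _ ≤ b R * (∑ t ∈ Finset.Ico r0 R, a t * ∏ s ∈ Finset.Ico (t + 1) R, b s) + a R := by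
          gcongr
      _ = ∑ t ∈ Finset.Ico r0 (R + 1), a t * ∏ s ∈ Finset.Ico (t + 1) (R + 1), b s := by
          rw [Finset.sum_Ico_succ_top hR]
          rw [Finset.mul_sum]
          have hemp : (Finset.Ico (R + 1) (R + 1)) = ∅ := by simp
          rw [hemp, Finset.prod_empty, mul_one]
          congr 1
          apply Finset.sum_congr rfl
          intro t ht
          rw [Finset.mem_Ico] at ht
          rw [Finset.prod_Ico_succ_top (by omega)]
          ring


lemma mam_pi_unique_integral {ι Z : Type} [Unique ι] [inst : Fintype ι] [MeasurableSpace Z]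
    (μ : Measure Z) [SigmaFinite μ] (G : (ι → Z) → ℝ) :
    ∫ x, G x ∂(Measure.pi fun _ : ι => μ) = ∫ ξ, G (fun _ => ξ) ∂μ := by
  have hi : inst = Unique.fintype := Subsingleton.elim _ _
  subst hi
  exact (((measurePreserving_funUnique μ ι).symm
    (MeasurableEquiv.funUnique ι Z)).integral_comp
    (MeasurableEquiv.funUnique ι Z).symm.measurableEmbedding G).symm

lemma mam_update_swap {Z : Type} [MeasurableSpace Z] (μ : Measure Z) [IsProbabilityMeasure μ]
    (m : ℕ) (j : Fin m) (H : (Fin m → Z) → Z → ℝ)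
    (hH : Measurable fun p : (Fin m → Z) × Z => H p.1 p.2)
    (hbd : ∀ D ξ, |H D ξ| ≤ 1) :
    ∫ D, H D (D j) ∂(Measure.pi fun _ : Fin m => μ)
      = ∫ D, ∫ ξ, H (Function.update D j ξ) ξ ∂μ ∂(Measure.pi fun _ : Fin m => μ) := by
  classical
  set p : Fin m → Prop := fun i => i = j with hp
  letI hdp : DecidablePred p := fun i => decidable_of_iff (i = j) (by rw [hp])
  haveI hu : Unique {i // p i} := Unique.subtypeEq j
  letI hf1 : Fintype {i // p i} := Subtype.fintype p
  letI hf2 : Fintype {i // ¬ p i} := Subtype.fintype _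
  let e := MeasurableEquiv.piEquivPiSubtypeProd (fun _ : Fin m => Z) p
  set μS : Measure ({i // p i} → Z) := Measure.pi fun _ => μ with hμS
  set μSc : Measure ({i // ¬ p i} → Z) := Measure.pi fun _ => μ with hμSc
  haveI : IsProbabilityMeasure μS := by rw [hμS]; infer_instance
  have hmps : MeasurePreserving e.symm (μS.prod μSc) (Measure.pi fun _ : Fin m => μ) := by
    exact (measurePreserving_piEquivPiSubtypeProd (fun _ : Fin m => μ) p).symm e
  have hesymm : ∀ (x : {i // p i} → Z) (y : {i // ¬ p i} → Z) (i : Fin m),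
      e.symm (x, y) i = if h : p i then x ⟨i, h⟩ else y ⟨i, h⟩ := by
    intro x y i; rfl
  have hj : p j := rfl
  have hesymm_j : ∀ (x : {i // p i} → Z) (y : {i // ¬ p i} → Z),
      e.symm (x, y) j = x ⟨j, hj⟩ := by
    intro x y; rw [hesymm, dif_pos hj]
  have hupd : ∀ (x : {i // p i} → Z) (y : {i // ¬ p i} → Z) (ξ : Z),
      Function.update (e.symm (x, y)) j ξ = e.symm ((fun _ => ξ), y) := by
    intro x y ξ
    funext i
    by_cases hi : p i
    · have hij : i = j := hi
      subst hij
      rw [Function.update_self, hesymm, dif_pos hi]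
    · have hne : i ≠ j := hi
      rw [Function.update_of_ne hne, hesymm, hesymm, dif_neg hi, dif_neg hi]
  have hSintegral : ∀ G : ({i // p i} → Z) → ℝ,
      ∫ x, G x ∂μS = ∫ ξ, G (fun _ => ξ) ∂μ := by
    intro G
    exact mam_pi_unique_integral μ G
  have humap : Measurable fun q : (Fin m → Z) × Z => Function.update q.1 j q.2 := by
    apply measurable_pi_lambda
    intro i
    by_cases hi : i = j
    · subst hi; simp only [Function.update_self]; exact measurable_snd
    · simp only [Function.update_of_ne hi]
      exact (measurable_pi_apply i).comp measurable_fst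
  -- LHS chain
  have hfL : Integrable (fun z : ({i // p i} → Z) × ({i // ¬ p i} → Z) =>
      H (e.symm z) (e.symm z j)) (μS.prod μSc) := by
    refine mam_integrable_of_bound _ 1 ?_ (fun z => hbd _ _)
    exact ((hH.comp ((e.symm.measurable).prodMk
      ((measurable_pi_apply j).comp e.symm.measurable)))).aestronglyMeasurable
  have hL1 : ∫ D, H D (D j) ∂(Measure.pi fun _ : Fin m => μ)
      = ∫ z, H (e.symm z) (e.symm z j) ∂(μS.prod μSc) :=
    (hmps.integral_comp e.symm.measurableEmbedding _).symm
  have hL2 : ∫ z, H (e.symm z) (e.symm z j) ∂(μS.prod μSc)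
      = ∫ y, ∫ x, H (e.symm (x, y)) (e.symm (x, y) j) ∂μS ∂μSc :=
    integral_prod_symm _ hfL
  have hL3 : ∫ y, ∫ x, H (e.symm (x, y)) (e.symm (x, y) j) ∂μS ∂μSc
      = ∫ y, ∫ ξ, H (e.symm ((fun _ => ξ), y)) ξ ∂μ ∂μSc := by
    refine integral_congr_ae (Filter.Eventually.of_forall fun y => ?_)
    show (∫ x, H (e.symm (x, y)) (e.symm (x, y) j) ∂μS)
        = ∫ ξ, H (e.symm ((fun _ => ξ), y)) ξ ∂μ
    refine (hSintegral (fun x => H (e.symm (x, y)) (e.symm (x, y) j))).trans ?_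
    refine integral_congr_ae (Filter.Eventually.of_forall fun ξ => ?_)
    simp only [hesymm_j]
  -- RHS chain
  have hRmeas : Measurable fun q : (Fin m → Z) × Z =>
      H (Function.update q.1 j q.2) q.2 :=
    hH.comp (humap.prodMk measurable_snd)
  have hjm : Measurable fun q : (({i // p i} → Z) × ({i // ¬ p i} → Z)) × Z =>
      H (Function.update (e.symm q.1) j q.2) q.2 :=
    hRmeas.comp ((e.symm.measurable.comp measurable_fst).prodMk measurable_snd)
  have hfR : Integrable (fun z : ({i // p i} → Z) × ({i // ¬ p i} → Z) =>
      ∫ ξ, H (Function.update (e.symm z) j ξ) ξ ∂μ) (μS.prod μSc) := by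
    refine mam_integrable_of_bound _ 1 ?_ ?_
    · exact (hjm.stronglyMeasurable.integral_prod_right').aestronglyMeasurable
    · intro z
      have := norm_integral_le_of_norm_le_const (μ := μ)
        (f := fun ξ => H (Function.update (e.symm z) j ξ) ξ) (C := 1)
        (Filter.Eventually.of_forall fun ξ => by
          simpa [Real.norm_eq_abs] using hbd _ _)
      simpa [Real.norm_eq_abs] using this
  have hR1 : ∫ D, ∫ ξ, H (Function.update D j ξ) ξ ∂μ ∂(Measure.pi fun _ : Fin m => μ)
      = ∫ z, ∫ ξ, H (Function.update (e.symm z) j ξ) ξ ∂μ ∂(μS.prod μSc) :=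
    (hmps.integral_comp e.symm.measurableEmbedding
      (fun D => ∫ ξ, H (Function.update D j ξ) ξ ∂μ)).symm
  have hR2 : ∫ z, ∫ ξ, H (Function.update (e.symm z) j ξ) ξ ∂μ ∂(μS.prod μSc)
      = ∫ y, ∫ x, ∫ ξ, H (Function.update (e.symm (x, y)) j ξ) ξ ∂μ ∂μS ∂μSc :=
    integral_prod_symm _ hfR
  have hR3 : ∫ y, ∫ x, ∫ ξ, H (Function.update (e.symm (x, y)) j ξ) ξ ∂μ ∂μS ∂μSc
      = ∫ y, ∫ ξ, H (e.symm ((fun _ => ξ), y)) ξ ∂μ ∂μSc := by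
    refine integral_congr_ae (Filter.Eventually.of_forall fun y => ?_)
    show (∫ x, ∫ ξ, H (Function.update (e.symm (x, y)) j ξ) ξ ∂μ ∂μS)
        = ∫ ξ, H (e.symm ((fun _ => ξ), y)) ξ ∂μ
    have hconst : ∀ x : {i // p i} → Z,
        (∫ ξ, H (Function.update (e.symm (x, y)) j ξ) ξ ∂μ)
          = ∫ ξ, H (e.symm ((fun _ => ξ), y)) ξ ∂μ := by
      intro x
      refine integral_congr_ae (Filter.Eventually.of_forall fun ξ => ?_)
      simp only [hupd]
    rw [integral_congr_ae (Filter.Eventually.of_forall hconst)]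
    simp
  rw [hL1, hL2, hL3, hR1, hR2, hR3]

end MamAux



/-- Theorem 6 (generalization bound for the MAM bilevel algorithm): if for every training
set `W'` and meta example `ξ` the upper loss `θ ↦ ℓ(θ, β(θ), ξ)` (denoted `F W' θ ξ`)
takes values in `[0,1]`, is `L̄`-Lipschitz and has `γ̄`-Lipschitz gradient, then there are
constants `K > 0` and `C ∈ (0,1)`, depending only on `c`, `L̄`, `γ̄`, such that for all
meta-set sizes `m`, horizons `T`, and runs of `T` steps of SGD on the empirical meta risk
with uniformly sampled meta examples and step sizes `η_t ≤ c/t` (with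
`c ≤ s(ℓ)/(2 L̄²)`), the expected generalization gap satisfies
`|E[R(A(D,W')) − R̂_D(A(D,W'))]| ≤ K T^C / m`. -/
theorem mam_generalization_bound
    (Z W : Type) [MeasurableSpace Z] [MeasurableSpace W]
    (μ : Measure Z) [IsProbabilityMeasure μ]
    (ν : Measure W) [IsProbabilityMeasure ν]
    (n k : ℕ)
    (F : (Fin n → W) → EuclideanSpace ℝ (Fin k) → Z → ℝ)
    (hF_meas : Measurable fun x : (Fin n → W) × EuclideanSpace ℝ (Fin k) × Z =>
      F x.1 x.2.1 x.2.2)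
    (hF_range : ∀ W' θ ξ, F W' θ ξ ∈ Set.Icc (0 : ℝ) 1)
    (Lbar γbar : ℝ) (hLbar : 0 < Lbar) (hγbar : 0 < γbar)
    (hF_diff : ∀ W' ξ, Differentiable ℝ (fun θ => F W' θ ξ))
    (hF_lip : ∀ W' ξ θ θ', |F W' θ ξ - F W' θ' ξ| ≤ Lbar * ‖θ - θ'‖)
    (hF_grad_lip : ∀ W' ξ θ θ',
      ‖gradient (fun ϑ => F W' ϑ ξ) θ - gradient (fun ϑ => F W' ϑ ξ) θ'‖
        ≤ γbar * ‖θ - θ'‖)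
    (sℓ : ℝ) (hsℓ : 0 < sℓ)
    (c : ℝ) (hc : 0 < c) (hc_small : c ≤ sℓ / (2 * Lbar ^ 2)) :
    ∃ K : ℝ, 0 < K ∧ ∃ C : ℝ, 0 < C ∧ C < 1 ∧
      ∀ (m T : ℕ), 1 < m → 1 ≤ T →
      ∀ (Ω : Type) [MeasurableSpace Ω] (π : Measure Ω),
        IsProbabilityMeasure π →
      ∀ (I : ℕ → Ω → Fin m),
        (∀ t, Measurable (I t)) →
        ProbabilityTheory.iIndepFun I π →
        (∀ t (i : Fin m), π (I t ⁻¹' {i}) = 1 / (m : ENNReal)) →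
      ∀ (η : ℕ → ℝ), (∀ t, 0 ≤ η t) → (∀ t : ℕ, 1 ≤ t → η t ≤ c / t) →
      ∀ (P : (Fin m → Z) → (Fin n → W) → ℕ → Ω → EuclideanSpace ℝ (Fin k))
        (θ1 : EuclideanSpace ℝ (Fin k)),
        (∀ D W' ω, P D W' 1 ω = θ1) →
        (∀ D W' (t : ℕ), 1 ≤ t → t ≤ T → ∀ ω,
          P D W' (t + 1) ω = P D W' t ω
            - η t • gradient (fun θ => F W' θ (D (I t ω))) (P D W' t ω)) →
        (Measurable fun x : (Fin m → Z) × (Fin n → W) × Ω =>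
          P x.1 x.2.1 (T + 1) x.2.2) →
        |∫ D, ∫ W', ∫ ω,
            ((∫ ξ, F W' (P D W' (T + 1) ω) ξ ∂μ)
              - (1 / (m : ℝ)) * ∑ i, F W' (P D W' (T + 1) ω) (D i)) ∂π
          ∂(Measure.pi fun _ : Fin n => ν) ∂(Measure.pi fun _ : Fin m => μ)|
          ≤ K * (T : ℝ) ^ C / m := by
  classical
  set q : ℝ := γbar * c with hqdef
  have hq : 0 < q := mul_pos hγbar hc
  set a : ℝ := q / (1 + q) with hadef
  have h1q : (0 : ℝ) < 1 + q := by linarith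
  have ha0 : 0 < a := div_pos hq h1q
  have ha1 : a < 1 := (div_lt_one h1q).2 (by linarith)
  set ε : ℝ := (1 - a) / 2 with hεdef
  have hε : 0 < ε := by rw [hεdef]; linarith
  set C : ℝ := a + ε with hCdef
  have hC0 : 0 < C := by rw [hCdef]; linarith
  have hC1 : C < 1 := by rw [hCdef, hεdef]; linarith
  set K : ℝ := 2 + 2 * c * Lbar ^ 2 / ε with hKdef
  have hK : 0 < K := by rw [hKdef]; positivity
  refine ⟨K, hK, C, hC0, hC1, ?_⟩
  intro m T hm hT Ω _ π hπ I hI_meas hI_indep hI_unif η hη0 hηc P θ1 hP1 hPrec hP_meas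
  haveI := hπ
  have hm0 : (0 : ℝ) < m := by exact_mod_cast (by omega : 0 < m)
  have hmne : (m : ℝ) ≠ 0 := ne_of_gt hm0
  have hT1 : (1 : ℝ) ≤ (T : ℝ) := by exact_mod_cast hT
  have hTpos : (0 : ℝ) < (T : ℝ) := by linarith
  have hF1 : ∀ W' θ ξ, |F W' θ ξ| ≤ 1 := by
    intro W' θ ξ; obtain ⟨h0, h1⟩ := hF_range W' θ ξ
    rw [abs_le]; constructor <;> linarith
  have habs_diff : ∀ W' θ θ' ξ, |F W' θ ξ - F W' θ' ξ| ≤ 1 := by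
    intro W' θ θ' ξ
    obtain ⟨h0, h1⟩ := hF_range W' θ ξ; obtain ⟨h0', h1'⟩ := hF_range W' θ' ξ
    rw [abs_le]; constructor <;> linarith
  -- the cut-off time t0
  set t0 : ℕ := ⌈(T : ℝ) ^ a⌉₊ with ht0def
  have hTa_pos : (0 : ℝ) < (T : ℝ) ^ a := Real.rpow_pos_of_pos hTpos a
  have hTa1 : (1 : ℝ) ≤ (T : ℝ) ^ a := by
    have := Real.rpow_le_rpow_of_exponent_le hT1 (le_of_lt ha0)
    simpa using this
  have ht0pos : 1 ≤ t0 := by rw [ht0def]; exact Nat.ceil_pos.2 hTa_pos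
  have ht0ge : (T : ℝ) ^ a ≤ (t0 : ℝ) := Nat.le_ceil _
  have ht0T : t0 ≤ T := by
    rw [ht0def]
    refine Nat.ceil_le.2 ?_
    calc (T : ℝ) ^ a ≤ (T : ℝ) ^ (1 : ℝ) :=
          Real.rpow_le_rpow_of_exponent_le hT1 (le_of_lt ha1)
      _ = (T : ℝ) := Real.rpow_one _
  have ht0le : (t0 : ℝ) ≤ (T : ℝ) ^ a + 1 := by
    rw [ht0def]; exact le_of_lt (Nat.ceil_lt_add_one (le_of_lt hTa_pos))
  have ht0pos' : (0 : ℝ) < (t0 : ℝ) := by exact_mod_cast ht0pos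
  -- the expansion factors
  set B : ℕ → ℝ := fun t => ∏ s ∈ Finset.Ico (t + 1) (T + 1), (1 + η s * γbar) with hBdef
  have hBfac : ∀ s, (1 : ℝ) ≤ 1 + η s * γbar := fun s => by nlinarith [hη0 s, hγbar]
  have hBpos : ∀ t, (0 : ℝ) ≤ B t := fun t => by
    rw [hBdef]
    exact Finset.prod_nonneg fun s _ => by nlinarith [hη0 s, hγbar]
  have hgrad : ∀ (W' : Fin n → W) (ξ : Z) (x : EuclideanSpace ℝ (Fin k)),
      ‖gradient (fun θ => F W' θ ξ) x‖ ≤ Lbar :=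
    fun W' ξ x => mam_grad_norm_le (le_of_lt hLbar) (hF_lip W' ξ) x
  -- the bad events and the dominating function g
  set A : Fin m → Set Ω := fun j => ⋃ t ∈ Finset.Icc 1 t0, (I t) ⁻¹' {j} with hAdef
  have hAmeas : ∀ j, MeasurableSet (A j) := by
    intro j; rw [hAdef]
    exact Finset.measurableSet_biUnion _ fun t _ => (hI_meas t) (measurableSet_singleton j)
  set g : Fin m → Ω → ℝ := fun j ω =>
      (A j).indicator (fun _ => (1 : ℝ)) ω
        + ∑ t ∈ Finset.Ico (t0 + 1) (T + 1),
            (2 * η t * Lbar ^ 2 * B t) * ((I t) ⁻¹' {j}).indicator (fun _ => (1 : ℝ)) ω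
    with hgdef
  have hcoef : ∀ t, (0 : ℝ) ≤ 2 * η t * Lbar ^ 2 * B t := fun t => by
    have h1 := hη0 t; have h2 := hBpos t; positivity
  have hind_le : ∀ (s : Set Ω) (ω : Ω), s.indicator (fun _ => (1 : ℝ)) ω ≤ 1 := by
    intro s ω; rw [Set.indicator_apply]; split <;> norm_num
  have hind_nn : ∀ (s : Set Ω) (ω : Ω), 0 ≤ s.indicator (fun _ => (1 : ℝ)) ω := by
    intro s ω; rw [Set.indicator_apply]; split <;> norm_num
  -- KEY pointwise stability bound
  have key : ∀ (j : Fin m) (D : Fin m → Z) (ξ : Z) (W' : Fin n → W) (ω : Ω),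
      |F W' (P D W' (T + 1) ω) ξ - F W' (P (Function.update D j ξ) W' (T + 1) ω) ξ|
        ≤ g j ω := by
    intro j D ξ W' ω
    have hsum_nonneg : (0 : ℝ) ≤ ∑ t ∈ Finset.Ico (t0 + 1) (T + 1),
        (2 * η t * Lbar ^ 2 * B t) * ((I t) ⁻¹' {j}).indicator (fun _ => (1 : ℝ)) ω :=
      Finset.sum_nonneg fun t _ => mul_nonneg (hcoef t) (hind_nn _ ω)
    by_cases hA : ω ∈ A j
    · have h1 : (A j).indicator (fun _ => (1 : ℝ)) ω = 1 := Set.indicator_of_mem hA _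
      have h3 := habs_diff W' (P D W' (T + 1) ω) (P (Function.update D j ξ) W' (T + 1) ω) ξ
      simp only [hgdef, h1]
      linarith
    · have hnot : ∀ t, 1 ≤ t → t ≤ t0 → I t ω ≠ j := by
        intro t h1 h2 hEq
        apply hA
        rw [hAdef]
        simp only [Set.mem_iUnion]
        exact ⟨t, Finset.mem_Icc.2 ⟨h1, h2⟩, hEq⟩
      have heq : ∀ r : ℕ, 1 ≤ r → r ≤ t0 + 1 →
          P D W' r ω = P (Function.update D j ξ) W' r ω := by
        intro r
        induction r with
        | zero => intro h _; exact absurd h (by omega)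
        | succ r ih =>
          intro _ h2
          by_cases hr : r = 0
          · subst hr; rw [hP1, hP1]
          · have hr1 : 1 ≤ r := by omega
            have hrt0 : r ≤ t0 := by omega
            have hrT : r ≤ T := by omega
            rw [hPrec D W' r hr1 hrT ω, hPrec (Function.update D j ξ) W' r hr1 hrT ω,
              ← ih hr1 (by omega), Function.update_of_ne (hnot r hr1 hrt0) ξ D]
      have hstep : ∀ r, t0 + 1 ≤ r → r < T + 1 →
          ‖P D W' (r + 1) ω - P (Function.update D j ξ) W' (r + 1) ω‖
            ≤ (1 + η r * γbar) * ‖P D W' r ω - P (Function.update D j ξ) W' r ω‖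
              + (2 * η r * Lbar) * (if I r ω = j then 1 else 0) := by
        intro r hr1 hr2
        have hr1' : 1 ≤ r := by omega
        have hrT : r ≤ T := by omega
        rw [hPrec D W' r hr1' hrT ω, hPrec (Function.update D j ξ) W' r hr1' hrT ω]
        set x := P D W' r ω with hx
        set y := P (Function.update D j ξ) W' r ω with hy
        set u := gradient (fun θ => F W' θ (D (I r ω))) x with hu
        set v := gradient (fun θ => F W' θ ((Function.update D j ξ) (I r ω))) y with hv
        have hsub : (x - η r • u) - (y - η r • v) = (x - y) - η r • (u - v) := by
          rw [smul_sub]; abel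
        have hle : ‖(x - η r • u) - (y - η r • v)‖ ≤ ‖x - y‖ + η r * ‖u - v‖ := by
          rw [hsub]
          refine (norm_sub_le _ _).trans ?_
          rw [norm_smul, Real.norm_eq_abs, abs_of_nonneg (hη0 r)]
        by_cases hj' : I r ω = j
        · have hub : ‖u - v‖ ≤ 2 * Lbar := by
            refine (norm_sub_le _ _).trans ?_
            have h1 := hgrad W' (D (I r ω)) x
            have h2 := hgrad W' ((Function.update D j ξ) (I r ω)) y
            rw [hu, hv]
            linarith
          rw [if_pos hj']
          have hη := hη0 r
          have hnn := norm_nonneg (x - y)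
          calc ‖(x - η r • u) - (y - η r • v)‖ ≤ ‖x - y‖ + η r * ‖u - v‖ := hle
            _ ≤ ‖x - y‖ + η r * (2 * Lbar) := by nlinarith
            _ ≤ (1 + η r * γbar) * ‖x - y‖ + (2 * η r * Lbar) * 1 := by
                nlinarith [mul_nonneg (mul_nonneg hη hγbar.le) hnn]
        · have hDupd : (Function.update D j ξ) (I r ω) = D (I r ω) :=
            Function.update_of_ne hj' ξ D
          have hub : ‖u - v‖ ≤ γbar * ‖x - y‖ := by
            rw [hu, hv, hDupd]
            exact hF_grad_lip W' (D (I r ω)) x y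
          rw [if_neg hj']
          have hη := hη0 r
          have hnn := norm_nonneg (x - y)
          calc ‖(x - η r • u) - (y - η r • v)‖ ≤ ‖x - y‖ + η r * ‖u - v‖ := hle
            _ ≤ (1 + η r * γbar) * ‖x - y‖ + (2 * η r * Lbar) * 0 := by
                nlinarith [mul_nonneg (mul_nonneg hη hγbar.le) hnn]
      have htraj := mam_traj_bound (fun r => P D W' r ω)
        (fun r => P (Function.update D j ξ) W' r ω)
        (fun t => (2 * η t * Lbar) * (if I t ω = j then 1 else 0))
        (fun t => 1 + η t * γbar) hBfac (t0 + 1)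
        (heq (t0 + 1) (by omega) (le_refl _)) (T + 1) (Nat.add_le_add_right ht0T 1) hstep
      have hlip := hF_lip W' ξ (P D W' (T + 1) ω) (P (Function.update D j ξ) W' (T + 1) ω)
      have h0A : (A j).indicator (fun _ => (1 : ℝ)) ω = 0 := Set.indicator_of_notMem hA _
      have hsum_eq : Lbar * ∑ t ∈ Finset.Ico (t0 + 1) (T + 1),
          ((2 * η t * Lbar) * (if I t ω = j then 1 else 0))
            * ∏ s ∈ Finset.Ico (t + 1) (T + 1), (1 + η s * γbar)
          = ∑ t ∈ Finset.Ico (t0 + 1) (T + 1),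
              (2 * η t * Lbar ^ 2 * B t) * ((I t) ⁻¹' {j}).indicator (fun _ => (1 : ℝ)) ω := by
        rw [Finset.mul_sum]
        refine Finset.sum_congr rfl fun t ht => ?_
        have hindt : ((I t) ⁻¹' {j}).indicator (fun _ => (1 : ℝ)) ω
            = if I t ω = j then 1 else 0 := by
          simp [Set.indicator_apply]
        rw [hindt, hBdef]
        ring
      simp only [hgdef, h0A, zero_add]
      calc |F W' (P D W' (T + 1) ω) ξ - F W' (P (Function.update D j ξ) W' (T + 1) ω) ξ|
          ≤ Lbar * ‖P D W' (T + 1) ω - P (Function.update D j ξ) W' (T + 1) ω‖ := hlip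
        _ ≤ Lbar * ∑ t ∈ Finset.Ico (t0 + 1) (T + 1),
              ((2 * η t * Lbar) * (if I t ω = j then 1 else 0))
                * ∏ s ∈ Finset.Ico (t + 1) (T + 1), (1 + η s * γbar) :=
            mul_le_mul_of_nonneg_left htraj (le_of_lt hLbar)
        _ = _ := hsum_eq
  -- integrability and integral of g
  have hgmeas : ∀ j, Measurable (g j) := by
    intro j
    simp only [hgdef]
    refine Measurable.add (measurable_const.indicator (hAmeas j)) ?_
    refine Finset.measurable_sum _ fun t _ => ?_
    exact (measurable_const.indicator ((hI_meas t) (measurableSet_singleton j))).const_mul _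
  have hgnn : ∀ j ω, 0 ≤ g j ω := by
    intro j ω
    simp only [hgdef]
    have h1 := hind_nn (A j) ω
    have h2 : (0 : ℝ) ≤ ∑ t ∈ Finset.Ico (t0 + 1) (T + 1),
        (2 * η t * Lbar ^ 2 * B t) * ((I t) ⁻¹' {j}).indicator (fun _ => (1 : ℝ)) ω :=
      Finset.sum_nonneg fun t _ => mul_nonneg (hcoef t) (hind_nn _ ω)
    linarith
  have hCg : ∀ j ω, |g j ω|
      ≤ 1 + ∑ t ∈ Finset.Ico (t0 + 1) (T + 1), 2 * η t * Lbar ^ 2 * B t := by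
    intro j ω
    rw [abs_of_nonneg (hgnn j ω)]
    simp only [hgdef]
    refine add_le_add (hind_le _ ω) (Finset.sum_le_sum fun t _ => ?_)
    calc (2 * η t * Lbar ^ 2 * B t) * ((I t) ⁻¹' {j}).indicator (fun _ => (1 : ℝ)) ω
        ≤ (2 * η t * Lbar ^ 2 * B t) * 1 :=
          mul_le_mul_of_nonneg_left (hind_le _ ω) (hcoef t)
      _ = 2 * η t * Lbar ^ 2 * B t := mul_one _
  have hgint : ∀ j, Integrable (g j) π := fun j =>
    mam_integrable_of_bound π _ ((hgmeas j).aestronglyMeasurable) (hCg j)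
  have hArea : ∀ j, (π (A j)).toReal ≤ (t0 : ℝ) / m := by
    intro j
    have h1 : π (A j) ≤ ∑ t ∈ Finset.Icc 1 t0, π ((I t) ⁻¹' {j}) := by
      rw [hAdef]; exact measure_biUnion_finset_le _ _
    have h2 : ∑ t ∈ Finset.Icc 1 t0, π ((I t) ⁻¹' {j}) = (t0 : ENNReal) / m := by
      rw [Finset.sum_congr rfl fun t _ => hI_unif t j]
      rw [Finset.sum_const, Nat.card_Icc]
      simp [nsmul_eq_mul, ENNReal.div_eq_inv_mul, mul_comm]
    have hmE : (m : ENNReal) ≠ 0 := by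
      exact_mod_cast (by omega : m ≠ 0)
    have hne : ((t0 : ENNReal) / m) ≠ ⊤ := by
      rw [Ne, ENNReal.div_eq_top]
      push_neg
      exact ⟨fun _ => hmE, fun h => absurd h (ENNReal.natCast_ne_top t0)⟩
    have h3 : (π (A j)).toReal ≤ ((t0 : ENNReal) / m).toReal :=
      ENNReal.toReal_mono hne (h2 ▸ h1)
    rwa [ENNReal.toReal_div, ENNReal.toReal_natCast, ENNReal.toReal_natCast] at h3
  have huni : ∀ t (j : Fin m), (π ((I t) ⁻¹' {j})).toReal = 1 / (m : ℝ) := by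
    intro t j; rw [hI_unif t j, ENNReal.toReal_div, ENNReal.toReal_one, ENNReal.toReal_natCast]
  have hgint_val : ∀ j, ∫ ω, g j ω ∂π
      ≤ (t0 : ℝ) / m
        + (∑ t ∈ Finset.Ico (t0 + 1) (T + 1), 2 * η t * Lbar ^ 2 * B t) / (m : ℝ) := by
    intro j
    have hintInd : Integrable ((A j).indicator (fun _ => (1 : ℝ))) π :=
      (integrable_const 1).indicator (hAmeas j)
    have hintT : ∀ t ∈ Finset.Ico (t0 + 1) (T + 1), Integrable (fun ω =>
        (2 * η t * Lbar ^ 2 * B t) * ((I t) ⁻¹' {j}).indicator (fun _ => (1 : ℝ)) ω) π :=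
      fun t _ =>
        ((integrable_const (1 : ℝ)).indicator ((hI_meas t) (measurableSet_singleton j))).const_mul _
    have e1 : ∫ ω, g j ω ∂π = (π (A j)).toReal
        + ∑ t ∈ Finset.Ico (t0 + 1) (T + 1),
            (2 * η t * Lbar ^ 2 * B t) * (π ((I t) ⁻¹' {j})).toReal := by
      simp only [hgdef]
      rw [integral_add hintInd (integrable_finset_sum _ hintT)]
      congr 1
      · rw [integral_indicator_const (1 : ℝ) (hAmeas j)]; simp [measureReal_def]
      · rw [integral_finset_sum _ hintT]
        refine Finset.sum_congr rfl fun t ht => ?_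
        rw [integral_const_mul, integral_indicator_const (1 : ℝ)
          ((hI_meas t) (measurableSet_singleton j))]
        simp [measureReal_def]
    rw [e1]
    have h2 : ∑ t ∈ Finset.Ico (t0 + 1) (T + 1),
        (2 * η t * Lbar ^ 2 * B t) * (π ((I t) ⁻¹' {j})).toReal
        = (∑ t ∈ Finset.Ico (t0 + 1) (T + 1), 2 * η t * Lbar ^ 2 * B t) / (m : ℝ) := by
      rw [Finset.sum_div]
      refine Finset.sum_congr rfl fun t ht => ?_
      rw [huni t j]; ring
    rw [h2]
    have := hArea j
    linarith
  -- numeric bound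
  have hlogT : 0 ≤ Real.log T := Real.log_nonneg hT1
  have hBle : ∀ t ∈ Finset.Ico (t0 + 1) (T + 1), B t ≤ ((T : ℝ) / t0) ^ q := by
    intro t ht
    rw [Finset.mem_Ico] at ht
    have ht1 : 1 ≤ t := by omega
    have htT : t ≤ T := by omega
    have htpos : (0 : ℝ) < t := by exact_mod_cast ht1
    have step1 : B t ≤ Real.exp (q * ∑ s ∈ Finset.Ico (t + 1) (T + 1), (1 : ℝ) / s) := by
      rw [hBdef, Finset.mul_sum, Real.exp_sum]
      refine Finset.prod_le_prod (fun s _ => by nlinarith [hη0 s, hγbar]) (fun s hs => ?_)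
      rw [Finset.mem_Ico] at hs
      have hs1 : (1 : ℕ) ≤ s := by omega
      have hsp : (0 : ℝ) < s := by exact_mod_cast hs1
      have hηs : η s ≤ c / s := hηc s hs1
      have h1 : η s * γbar ≤ q * (1 / s) := by
        have : q * (1 / (s : ℝ)) = γbar * (c / s) := by rw [hqdef]; ring
        rw [this]
        nlinarith [hγbar]
      have h2 := Real.add_one_le_exp (q * (1 / (s : ℝ)))
      linarith
    have step2 : q * ∑ s ∈ Finset.Ico (t + 1) (T + 1), (1 : ℝ) / s
        ≤ q * (Real.log T - Real.log t) :=
      mul_le_mul_of_nonneg_left (mam_sum_inv_le_log t ht1 T htT) (le_of_lt hq)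
    have step3 : Real.exp (q * (Real.log T - Real.log t)) = ((T : ℝ) / t) ^ q := by
      rw [← Real.log_div (ne_of_gt hTpos) (ne_of_gt htpos),
        Real.rpow_def_of_pos (div_pos hTpos htpos), mul_comm]
    have step4 : ((T : ℝ) / t) ^ q ≤ ((T : ℝ) / t0) ^ q := by
      refine Real.rpow_le_rpow (by positivity) ?_ (le_of_lt hq)
      have ht0t : (t0 : ℝ) ≤ t := by exact_mod_cast (by omega : t0 ≤ t)
      gcongr
    calc B t ≤ Real.exp (q * ∑ s ∈ Finset.Ico (t + 1) (T + 1), (1 : ℝ) / s) := step1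
      _ ≤ Real.exp (q * (Real.log T - Real.log t)) := Real.exp_le_exp.2 step2
      _ = ((T : ℝ) / t) ^ q := step3
      _ ≤ ((T : ℝ) / t0) ^ q := step4
  have hS1 : (∑ t ∈ Finset.Ico (t0 + 1) (T + 1), 2 * η t * Lbar ^ 2 * B t)
      ≤ 2 * Lbar ^ 2 * c * (((T : ℝ) / t0) ^ q * Real.log T) := by
    have hterm : ∀ t ∈ Finset.Ico (t0 + 1) (T + 1),
        2 * η t * Lbar ^ 2 * B t ≤ (2 * Lbar ^ 2 * c * ((T : ℝ) / t0) ^ q) * (1 / t) := by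
      intro t ht
      have htmem := ht
      rw [Finset.mem_Ico] at htmem
      have ht1 : 1 ≤ t := by omega
      have htpos : (0 : ℝ) < t := by exact_mod_cast ht1
      have hηt : η t ≤ c / t := hηc t ht1
      have hstep : 2 * η t * Lbar ^ 2 * B t ≤ 2 * (c / t) * Lbar ^ 2 * (((T : ℝ) / t0) ^ q) := by
        have hb := hBle t ht
        have hc0 : (0 : ℝ) ≤ c / t := by positivity
        have hq0 : (0 : ℝ) ≤ ((T : ℝ) / t0) ^ q := by positivity
        have hB0 := hBpos t
        have h1 : η t * B t ≤ (c / t) * (((T : ℝ) / t0) ^ q) :=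
          mul_le_mul hηt hb hB0 hc0
        calc 2 * η t * Lbar ^ 2 * B t = (2 * Lbar ^ 2) * (η t * B t) := by ring
          _ ≤ (2 * Lbar ^ 2) * ((c / t) * (((T : ℝ) / t0) ^ q)) :=
              mul_le_mul_of_nonneg_left h1 (by positivity)
          _ = 2 * (c / t) * Lbar ^ 2 * (((T : ℝ) / t0) ^ q) := by ring
      calc 2 * η t * Lbar ^ 2 * B t ≤ 2 * (c / t) * Lbar ^ 2 * (((T : ℝ) / t0) ^ q) := hstep
        _ = (2 * Lbar ^ 2 * c * ((T : ℝ) / t0) ^ q) * (1 / t) := by ring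
    calc (∑ t ∈ Finset.Ico (t0 + 1) (T + 1), 2 * η t * Lbar ^ 2 * B t)
        ≤ ∑ t ∈ Finset.Ico (t0 + 1) (T + 1),
            (2 * Lbar ^ 2 * c * ((T : ℝ) / t0) ^ q) * (1 / t) := Finset.sum_le_sum hterm
      _ = (2 * Lbar ^ 2 * c * ((T : ℝ) / t0) ^ q)
            * ∑ t ∈ Finset.Ico (t0 + 1) (T + 1), (1 : ℝ) / t := by rw [← Finset.mul_sum]
      _ ≤ (2 * Lbar ^ 2 * c * ((T : ℝ) / t0) ^ q) * Real.log T := by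
          refine mul_le_mul_of_nonneg_left ?_ (by positivity)
          have h := mam_sum_inv_le_log t0 ht0pos T ht0T
          have hlt0 : 0 ≤ Real.log t0 := Real.log_nonneg (by exact_mod_cast ht0pos)
          linarith
      _ = 2 * Lbar ^ 2 * c * (((T : ℝ) / t0) ^ q * Real.log T) := by ring
  have hTdiv : ((T : ℝ) / t0) ^ q ≤ (T : ℝ) ^ a := by
    have h1 : (T : ℝ) / t0 ≤ (T : ℝ) ^ (1 - a) := by
      rw [Real.rpow_sub hTpos, Real.rpow_one]
      gcongr
    calc ((T : ℝ) / t0) ^ q ≤ ((T : ℝ) ^ (1 - a)) ^ q :=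
          Real.rpow_le_rpow (by positivity) h1 (le_of_lt hq)
      _ = (T : ℝ) ^ ((1 - a) * q) := (Real.rpow_mul (le_of_lt hTpos) _ _).symm
      _ = (T : ℝ) ^ a := by
          congr 1
          rw [hadef]
          field_simp
          ring
  have hlog : Real.log T ≤ (T : ℝ) ^ ε / ε := by
    have h1 : Real.log ((T : ℝ) ^ ε) = ε * Real.log T := Real.log_rpow hTpos ε
    have h2 : Real.log ((T : ℝ) ^ ε) ≤ (T : ℝ) ^ ε - 1 :=
      Real.log_le_sub_one_of_pos (Real.rpow_pos_of_pos hTpos ε)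
    rw [h1] at h2
    rw [le_div_iff₀ hε]
    nlinarith [Real.rpow_pos_of_pos hTpos ε]
  have hTaC : (T : ℝ) ^ a ≤ (T : ℝ) ^ C :=
    Real.rpow_le_rpow_of_exponent_le hT1 (by rw [hCdef]; linarith)
  have h1C : (1 : ℝ) ≤ (T : ℝ) ^ C := by
    have := Real.rpow_le_rpow_of_exponent_le hT1 (le_of_lt hC0)
    simpa using this
  have hprod : (T : ℝ) ^ a * ((T : ℝ) ^ ε / ε) = (T : ℝ) ^ C / ε := by
    rw [hCdef, Real.rpow_add hTpos]; ring
  have hfinal : (t0 : ℝ) + (∑ t ∈ Finset.Ico (t0 + 1) (T + 1), 2 * η t * Lbar ^ 2 * B t)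
      ≤ K * (T : ℝ) ^ C := by
    have hc1 : ((T : ℝ) / t0) ^ q * Real.log T ≤ (T : ℝ) ^ a * ((T : ℝ) ^ ε / ε) :=
      mul_le_mul hTdiv hlog hlogT (by positivity)
    have hc2 : (∑ t ∈ Finset.Ico (t0 + 1) (T + 1), 2 * η t * Lbar ^ 2 * B t)
        ≤ 2 * Lbar ^ 2 * c * ((T : ℝ) ^ C / ε) := by
      refine hS1.trans ?_
      rw [← hprod]
      exact mul_le_mul_of_nonneg_left hc1 (by positivity)
    have ht0b : (t0 : ℝ) ≤ (T : ℝ) ^ C + 1 := le_trans ht0le (by linarith)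
    have hrw : 2 * Lbar ^ 2 * c * ((T : ℝ) ^ C / ε) = (2 * c * Lbar ^ 2 / ε) * (T : ℝ) ^ C := by
      ring
    rw [hKdef]
    rw [hrw] at hc2
    nlinarith [h1C]
  have hgbound : ∀ j, ∫ ω, g j ω ∂π ≤ K * (T : ℝ) ^ C / m := by
    intro j
    refine (hgint_val j).trans ?_
    rw [← add_div]
    exact (div_le_div_iff_of_pos_right hm0).2 hfinal
  -- measure-theoretic part
  haveI : IsProbabilityMeasure (Measure.pi fun _ : Fin m => μ) := by infer_instance
  haveI : IsProbabilityMeasure (Measure.pi fun _ : Fin n => ν) := by infer_instance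
  set μm : Measure (Fin m → Z) := Measure.pi fun _ : Fin m => μ with hμm
  set νn : Measure (Fin n → W) := Measure.pi fun _ : Fin n => ν with hνn
  haveI : IsProbabilityMeasure μm := by rw [hμm]; infer_instance
  haveI : IsProbabilityMeasure νn := by rw [hνn]; infer_instance
  set ρ : Measure ((Fin n → W) × Ω) := νn.prod π with hρdef
  haveI : IsProbabilityMeasure ρ := by rw [hρdef]; infer_instance
  have hFmeas0 : Measurable fun r : ((Fin m → Z) × Z) × ((Fin n → W) × Ω) =>
      F r.2.1 (P r.1.1 r.2.1 (T + 1) r.2.2) r.1.2 := by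
    refine hF_meas.comp (Measurable.prodMk ?_ (Measurable.prodMk ?_ ?_))
    · exact measurable_fst.comp measurable_snd
    · exact hP_meas.comp (Measurable.prodMk (measurable_fst.comp measurable_fst)
        (Measurable.prodMk (measurable_fst.comp measurable_snd)
          (measurable_snd.comp measurable_snd)))
    · exact measurable_snd.comp measurable_fst
  set Φ : (Fin m → Z) × Z → ℝ := fun p => ∫ y, F y.1 (P p.1 y.1 (T + 1) y.2) p.2 ∂ρ
    with hΦdef
  have hΦsm : StronglyMeasurable Φ := hFmeas0.stronglyMeasurable.integral_prod_right'
  have hΦbd : ∀ p, |Φ p| ≤ 1 := fun p => mam_abs_integral_le ρ (fun y => hF1 _ _ _)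
  have hinner : ∀ D : Fin m → Z,
      (∫ W', ∫ ω, ((∫ ξ, F W' (P D W' (T + 1) ω) ξ ∂μ)
          - (1 / (m : ℝ)) * ∑ i, F W' (P D W' (T + 1) ω) (D i)) ∂π ∂νn)
      = (∫ ξ, Φ (D, ξ) ∂μ) - (1 / (m : ℝ)) * ∑ j, Φ (D, D j) := by
    intro D
    have hmD : Measurable fun r : ((Fin n → W) × Ω) × Z =>
        F r.1.1 (P D r.1.1 (T + 1) r.1.2) r.2 := by
      refine hF_meas.comp (Measurable.prodMk (measurable_fst.comp measurable_fst)
        (Measurable.prodMk (hP_meas.comp (Measurable.prodMk measurable_const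
          (Measurable.prodMk (measurable_fst.comp measurable_fst)
            (measurable_snd.comp measurable_fst)))) measurable_snd))
    have hmDi : ∀ i : Fin m, Measurable fun y : (Fin n → W) × Ω =>
        F y.1 (P D y.1 (T + 1) y.2) (D i) := by
      intro i
      refine hF_meas.comp (Measurable.prodMk measurable_fst (Measurable.prodMk
        (hP_meas.comp (Measurable.prodMk measurable_const
          (Measurable.prodMk measurable_fst measurable_snd))) measurable_const))
    have hf1sm : StronglyMeasurable fun y : (Fin n → W) × Ω =>
        ∫ ξ, F y.1 (P D y.1 (T + 1) y.2) ξ ∂μ := hmD.stronglyMeasurable.integral_prod_right'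
    have hint_f1 : Integrable (fun y : (Fin n → W) × Ω =>
        ∫ ξ, F y.1 (P D y.1 (T + 1) y.2) ξ ∂μ) ρ :=
      mam_integrable_of_bound ρ 1 hf1sm.aestronglyMeasurable
        (fun y => mam_abs_integral_le μ (fun ξ => hF1 _ _ _))
    have hint_f2i : ∀ i : Fin m, Integrable (fun y : (Fin n → W) × Ω =>
        F y.1 (P D y.1 (T + 1) y.2) (D i)) ρ := fun i =>
      mam_integrable_of_bound ρ 1 (hmDi i).aestronglyMeasurable (fun y => hF1 _ _ _)
    have hint_f2 : Integrable (fun y : (Fin n → W) × Ω =>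
        (1 / (m : ℝ)) * ∑ i, F y.1 (P D y.1 (T + 1) y.2) (D i)) ρ :=
      (integrable_finset_sum _ fun i _ => hint_f2i i).const_mul _
    have hint_sub : Integrable (fun y : (Fin n → W) × Ω =>
        (∫ ξ, F y.1 (P D y.1 (T + 1) y.2) ξ ∂μ)
          - (1 / (m : ℝ)) * ∑ i, F y.1 (P D y.1 (T + 1) y.2) (D i)) ρ :=
      hint_f1.sub hint_f2
    have e1 : (∫ W', ∫ ω, ((∫ ξ, F W' (P D W' (T + 1) ω) ξ ∂μ)
          - (1 / (m : ℝ)) * ∑ i, F W' (P D W' (T + 1) ω) (D i)) ∂π ∂νn)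
        = ∫ y, ((∫ ξ, F y.1 (P D y.1 (T + 1) y.2) ξ ∂μ)
          - (1 / (m : ℝ)) * ∑ i, F y.1 (P D y.1 (T + 1) y.2) (D i)) ∂ρ :=
      (integral_prod _ hint_sub).symm
    have e2 : ∫ y, ((∫ ξ, F y.1 (P D y.1 (T + 1) y.2) ξ ∂μ)
          - (1 / (m : ℝ)) * ∑ i, F y.1 (P D y.1 (T + 1) y.2) (D i)) ∂ρ
        = (∫ y, ∫ ξ, F y.1 (P D y.1 (T + 1) y.2) ξ ∂μ ∂ρ)
          - ∫ y, (1 / (m : ℝ)) * ∑ i, F y.1 (P D y.1 (T + 1) y.2) (D i) ∂ρ :=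
      integral_sub hint_f1 hint_f2
    have e3 : (∫ y, ∫ ξ, F y.1 (P D y.1 (T + 1) y.2) ξ ∂μ ∂ρ) = ∫ ξ, Φ (D, ξ) ∂μ := by
      have hintu : Integrable (fun r : ((Fin n → W) × Ω) × Z =>
          F r.1.1 (P D r.1.1 (T + 1) r.1.2) r.2) (ρ.prod μ) :=
        mam_integrable_of_bound _ 1 hmD.aestronglyMeasurable (fun r => hF1 _ _ _)
      exact integral_integral_swap hintu
    have e4 : (∫ y, (1 / (m : ℝ)) * ∑ i, F y.1 (P D y.1 (T + 1) y.2) (D i) ∂ρ)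
        = (1 / (m : ℝ)) * ∑ j, Φ (D, D j) := by
      rw [integral_const_mul]
      congr 1
      rw [integral_finset_sum _ (fun i _ => hint_f2i i)]
    rw [e1, e2, e3, e4]
  have houter : (∫ D, ∫ W', ∫ ω, ((∫ ξ, F W' (P D W' (T + 1) ω) ξ ∂μ)
        - (1 / (m : ℝ)) * ∑ i, F W' (P D W' (T + 1) ω) (D i)) ∂π ∂νn ∂μm)
      = ∫ D, ((∫ ξ, Φ (D, ξ) ∂μ) - (1 / (m : ℝ)) * ∑ j, Φ (D, D j)) ∂μm :=
    integral_congr_ae (Filter.Eventually.of_forall hinner)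
  have hint1 : Integrable (fun D => ∫ ξ, Φ (D, ξ) ∂μ) μm :=
    mam_integrable_of_bound _ 1 (hΦsm.integral_prod_right').aestronglyMeasurable
      (fun D => mam_abs_integral_le μ fun ξ => hΦbd _)
  have hintj : ∀ j : Fin m, Integrable (fun D => Φ (D, D j)) μm := fun j =>
    mam_integrable_of_bound _ 1
      ((hΦsm.comp_measurable (measurable_id.prodMk (measurable_pi_apply j))).aestronglyMeasurable)
      (fun D => hΦbd _)
  have hsplit : (∫ D, ((∫ ξ, Φ (D, ξ) ∂μ) - (1 / (m : ℝ)) * ∑ j, Φ (D, D j)) ∂μm)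
      = (∫ D, ∫ ξ, Φ (D, ξ) ∂μ ∂μm)
        - (1 / (m : ℝ)) * ∑ j, ∫ D, Φ (D, D j) ∂μm := by
    rw [integral_sub hint1 ((integrable_finset_sum _ fun j _ => hintj j).const_mul _),
      integral_const_mul, integral_finset_sum _ (fun j _ => hintj j)]
  have hswap : ∀ j : Fin m, ∫ D, Φ (D, D j) ∂μm
      = ∫ D, ∫ ξ, Φ (Function.update D j ξ, ξ) ∂μ ∂μm := by
    intro j
    exact mam_update_swap μ m j (fun D ξ => Φ (D, ξ)) hΦsm.measurable (fun D ξ => hΦbd _)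
  have humap : ∀ j : Fin m, Measurable fun p : (Fin m → Z) × Z =>
      Function.update p.1 j p.2 := by
    intro j
    apply measurable_pi_lambda
    intro i
    by_cases hi : i = j
    · subst hi; simp only [Function.update_self]; exact measurable_snd
    · simp only [Function.update_of_ne hi]
      exact (measurable_pi_apply i).comp measurable_fst
  have hdiff : ∀ j : Fin m,
      |(∫ D, ∫ ξ, Φ (D, ξ) ∂μ ∂μm) - ∫ D, ∫ ξ, Φ (Function.update D j ξ, ξ) ∂μ ∂μm|
        ≤ K * (T : ℝ) ^ C / m := by
    intro j
    have hmupd : Measurable fun p : (Fin m → Z) × Z => Φ (Function.update p.1 j p.2, p.2) :=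
      hΦsm.measurable.comp ((humap j).prodMk measurable_snd)
    have hintY : Integrable (fun D => ∫ ξ, Φ (Function.update D j ξ, ξ) ∂μ) μm :=
      mam_integrable_of_bound _ 1
        (hmupd.stronglyMeasurable.integral_prod_right').aestronglyMeasurable
        (fun D => mam_abs_integral_le μ fun ξ => hΦbd _)
    rw [← integral_sub hint1 hintY]
    refine mam_abs_integral_le μm fun D => ?_
    have hfix1 : Integrable (fun ξ => Φ (D, ξ)) μ :=
      mam_integrable_of_bound _ 1
        ((hΦsm.measurable.comp (measurable_const.prodMk measurable_id)).aestronglyMeasurable)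
        (fun ξ => hΦbd _)
    have hfix2 : Integrable (fun ξ => Φ (Function.update D j ξ, ξ)) μ :=
      mam_integrable_of_bound _ 1
        ((hmupd.comp (measurable_const.prodMk measurable_id)).aestronglyMeasurable)
        (fun ξ => hΦbd _)
    rw [← integral_sub hfix1 hfix2]
    refine mam_abs_integral_le μ fun ξ => ?_
    refine le_trans ?_ (hgbound j)
    have hintA : Integrable (fun y : (Fin n → W) × Ω =>
        F y.1 (P D y.1 (T + 1) y.2) ξ) ρ :=
      mam_integrable_of_bound ρ 1
        ((hFmeas0.comp ((measurable_const (a := ((D, ξ) : (Fin m → Z) × Z))).prodMk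
          measurable_id)).aestronglyMeasurable)
        (fun y => hF1 _ _ _)
    have hintB : Integrable (fun y : (Fin n → W) × Ω =>
        F y.1 (P (Function.update D j ξ) y.1 (T + 1) y.2) ξ) ρ :=
      mam_integrable_of_bound ρ 1
        ((hFmeas0.comp ((measurable_const
          (a := ((Function.update D j ξ, ξ) : (Fin m → Z) × Z))).prodMk
          measurable_id)).aestronglyMeasurable)
        (fun y => hF1 _ _ _)
    have e6 : Φ (D, ξ) - Φ (Function.update D j ξ, ξ)
        = ∫ y, (F y.1 (P D y.1 (T + 1) y.2) ξ
            - F y.1 (P (Function.update D j ξ) y.1 (T + 1) y.2) ξ) ∂ρ :=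
      (integral_sub hintA hintB).symm
    rw [e6]
    have hgsnd_int : Integrable (fun y : (Fin n → W) × Ω => g j y.2) ρ :=
      mam_integrable_of_bound _ _ (((hgmeas j).comp measurable_snd).aestronglyMeasurable)
        (fun y => hCg j y.2)
    calc |∫ y, (F y.1 (P D y.1 (T + 1) y.2) ξ
            - F y.1 (P (Function.update D j ξ) y.1 (T + 1) y.2) ξ) ∂ρ|
        ≤ ∫ y, |F y.1 (P D y.1 (T + 1) y.2) ξ
            - F y.1 (P (Function.update D j ξ) y.1 (T + 1) y.2) ξ| ∂ρ := by
          simpa [Real.norm_eq_abs] using norm_integral_le_integral_norm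
            (μ := ρ) (f := fun y : (Fin n → W) × Ω => F y.1 (P D y.1 (T + 1) y.2) ξ
              - F y.1 (P (Function.update D j ξ) y.1 (T + 1) y.2) ξ)
      _ ≤ ∫ y, g j y.2 ∂ρ :=
          integral_mono (hintA.sub hintB).abs hgsnd_int (fun y => key j D ξ y.1 y.2)
      _ = ∫ ω, g j ω ∂π := by
          have hmap : ∫ y, g j y.2 ∂ρ = ∫ ω, g j ω ∂(Measure.map Prod.snd ρ) :=
            (integral_map measurable_snd.aemeasurable
              (hgmeas j).stronglyMeasurable.aestronglyMeasurable).symm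
          rw [hmap, hρdef, Measure.map_snd_prod]
          simp
  -- conclusion
  have hswapsum : (∑ j, ∫ D, Φ (D, D j) ∂μm)
      = ∑ j, ∫ D, ∫ ξ, Φ (Function.update D j ξ, ξ) ∂μ ∂μm :=
    Finset.sum_congr rfl fun j _ => hswap j
  rw [houter, hsplit, hswapsum]
  have hsum_eq2 : (∫ D, ∫ ξ, Φ (D, ξ) ∂μ ∂μm)
      - (1 / (m : ℝ)) * ∑ j, ∫ D, ∫ ξ, Φ (Function.update D j ξ, ξ) ∂μ ∂μm
      = (1 / (m : ℝ)) * ∑ j : Fin m, ((∫ D, ∫ ξ, Φ (D, ξ) ∂μ ∂μm)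
          - ∫ D, ∫ ξ, Φ (Function.update D j ξ, ξ) ∂μ ∂μm) := by
    rw [Finset.sum_sub_distrib, Finset.sum_const, Finset.card_univ, Fintype.card_fin,
      nsmul_eq_mul]
    field_simp
  rw [hsum_eq2]
  calc |(1 / (m : ℝ)) * ∑ j : Fin m, ((∫ D, ∫ ξ, Φ (D, ξ) ∂μ ∂μm)
          - ∫ D, ∫ ξ, Φ (Function.update D j ξ, ξ) ∂μ ∂μm)|
      ≤ (1 / (m : ℝ)) * ∑ j : Fin m, |(∫ D, ∫ ξ, Φ (D, ξ) ∂μ ∂μm)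
          - ∫ D, ∫ ξ, Φ (Function.update D j ξ, ξ) ∂μ ∂μm| := by
        rw [abs_mul, abs_of_nonneg (by positivity : (0:ℝ) ≤ 1 / (m : ℝ))]
        exact mul_le_mul_of_nonneg_left (Finset.abs_sum_le_sum_abs _ _) (by positivity)
    _ ≤ (1 / (m : ℝ)) * ∑ _j : Fin m, (K * (T : ℝ) ^ C / m) :=
        mul_le_mul_of_nonneg_left (Finset.sum_le_sum fun j _ => hdiff j) (by positivity)
    _ = K * (T : ℝ) ^ C / m := by
        rw [Finset.sum_const, Finset.card_univ, Fintype.card_fin, nsmul_eq_mul]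
        field_simp
end
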